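/- arXiv:2401.01000 — 3 statements merged into one kernel-verified Lean document; each statement's English description precedes it below -/
import Mathlib

section
/- Let k be even and let g ∈ S_{k−2,ℝ} be a nonzero cusp form of weight k−2 with real Fourier coefficients, and set f = Dg (a quasimodular form of weight k and depth 1). Then f has at least two real zeros in ℍ: there exists y > 0 with f(iy) = 0 (a zero on the central line {z ∈ ℍ : Re(z) = 0}) and there exists y' > 0 with f(1/2 + iy') = 0 (a zero on the line {z ∈ ℍ : Re(z) = 1/2}). -/
open Filter Topology
open scoped Classical

noncomputable section

/-- `2πi` as a complex number. -/
def twoPiI : ℂ := 2 * Real.pi * Complex.I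

/-- The upper half-plane, viewed as a subset of `ℂ`. -/
def UHP : Set ℂ := {z : ℂ | 0 < z.im}

/-- `f` is weakly modular of weight `k` for the full modular group `PSL₂(ℤ)`. -/
def IsWeaklyModular (k : ℤ) (f : ℂ → ℂ) : Prop :=
  ∀ a b c d : ℤ, a * d - b * c = 1 → ∀ z ∈ UHP,
    f (((a : ℂ) * z + b) / ((c : ℂ) * z + d)) = ((c : ℂ) * z + d) ^ k * f z

/-- `f` has the `q`-expansion with coefficients `c` on the upper half-plane,
i.e. `f z = ∑_{n ≥ 0} c n * q^n` with `q = exp(2πiz)`. -/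
def HasQExp (f : ℂ → ℂ) (c : ℕ → ℂ) : Prop :=
  ∀ z ∈ UHP, HasSum (fun n : ℕ => c n * Complex.exp (twoPiI * n * z)) (f z)

/-- A holomorphic modular form of weight `k` for `PSL₂(ℤ)` with `q`-expansion
coefficients `c`. -/
def IsModularForm (k : ℤ) (f : ℂ → ℂ) (c : ℕ → ℂ) : Prop :=
  DifferentiableOn ℂ f UHP ∧ IsWeaklyModular k f ∧ HasQExp f c

/-- The divisor power sum `σ_j(n)` (equal to `0` for `n = 0`). -/
def sigmaC (j n : ℕ) : ℂ := ∑ d ∈ n.divisors, (d : ℂ) ^ j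

/-- The normalized Eisenstein series `E_k = 1 - (2k/B_k) ∑ σ_{k-1}(n) qⁿ`
(with the conventions `E₀ = 1`). -/
def Ek (k : ℕ) : ℂ → ℂ := fun z =>
  1 - (2 * k / ((bernoulli k : ℚ) : ℂ)) *
    ∑' n : ℕ, sigmaC (k - 1) n * Complex.exp (twoPiI * n * z)

/-- The quasimodular Eisenstein series `E₂`. -/
def E2 : ℂ → ℂ := Ek 2

/-- The normalized derivation `D = (2πi)⁻¹ d/dz = q d/dq`. -/
def Dop (f : ℂ → ℂ) : ℂ → ℂ := fun z => (twoPiI)⁻¹ * deriv f z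

/-- The discriminant cusp form `Δ = q ∏ (1-qⁿ)²⁴`. -/
def Disc : ℂ → ℂ := fun z =>
  Complex.exp (twoPiI * z) * ∏' n : ℕ, (1 - Complex.exp (twoPiI * (n + 1) * z)) ^ 24

/-- The modular `j`-invariant `j = E₄³/Δ`. -/
def jfun : ℂ → ℂ := fun z => (Ek 4 z) ^ 3 / Disc z

/-- The filter of neighbourhoods of `i∞`, on `ℂ`. -/
def atImInfty : Filter ℂ := Filter.comap Complex.im Filter.atTop

/-- The finite part of the standard fundamental domain `F` of `PSL₂(ℤ)`. -/
def Fdom : Set ℂ :=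
  {z : ℂ | 0 < z.im ∧ -(1/2 : ℝ) < z.re ∧ z.re ≤ 1/2 ∧
    (z.re < 0 → 1 < ‖z‖) ∧ (0 ≤ z.re → 1 ≤ ‖z‖)}

/-- The finite part of the shifted fundamental domain `ℱ` of `PSL₂(ℤ)`. -/
def Fdom' : Set ℂ :=
  {z : ℂ | 0 < z.im ∧ 0 ≤ z.re ∧ z.re < 1 ∧
    (z.re ≤ 1/2 → 1 ≤ ‖z‖) ∧ (1/2 < z.re → 1 < ‖z - 1‖)}

/-- `f` is a quasimodular form of weight `k` and depth at most `p` for `PSL₂(ℤ)`: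
`f = ∑_{i ≤ p} f_i E₂^i` with `f_i` a modular form of weight `k - 2i`. -/
def IsQuasimodular (k : ℤ) (p : ℕ) (f : ℂ → ℂ) : Prop :=
  ∃ (g : ℕ → ℂ → ℂ) (c : ℕ → ℕ → ℂ),
    (∀ i ≤ p, IsModularForm (k - 2 * i) (g i) (c i)) ∧
    ∀ z ∈ UHP, f z = ∑ i ∈ Finset.range (p + 1), g i z * E2 z ^ i

/-- `f` is a quasimodular form of weight `k` and depth at most `p` all of whose
Fourier coefficients are real (each component `f_i` has real coefficients). -/
def IsQuasimodularR (k : ℤ) (p : ℕ) (f : ℂ → ℂ) : Prop :=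
  ∃ (g : ℕ → ℂ → ℂ) (c : ℕ → ℕ → ℝ),
    (∀ i ≤ p, IsModularForm (k - 2 * i) (g i) (fun n => ((c i n : ℝ) : ℂ))) ∧
    ∀ z ∈ UHP, f z = ∑ i ∈ Finset.range (p + 1), g i z * E2 z ^ i

/-- `f` is a quasimodular form of weight `k` and depth exactly `p`. -/
def IsQuasimodularDepth (k : ℤ) (p : ℕ) (f : ℂ → ℂ) : Prop :=
  ∃ (g : ℕ → ℂ → ℂ) (c : ℕ → ℕ → ℂ),
    (∀ i ≤ p, IsModularForm (k - 2 * i) (g i) (c i)) ∧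
    (∀ z ∈ UHP, f z = ∑ i ∈ Finset.range (p + 1), g i z * E2 z ^ i) ∧
    ∃ z ∈ UHP, g p z ≠ 0

/-- `ℓ = dim S_k`, i.e. `k = 12ℓ + k'` with `k' ∈ {0,4,6,8,10,14}`. -/
def ell (k : ℕ) : ℕ := if k % 12 = 2 then k / 12 - 1 else k / 12

/-- `k' ∈ {0,4,6,8,10,14}` with `k = 12ℓ + k'`. -/
def kres (k : ℕ) : ℕ := k - 12 * ell k

/-- `z` and `w` are `PSL₂(ℤ)`-equivalent. -/
def ModEquiv (z w : ℂ) : Prop :=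
  ∃ a b c d : ℤ, a * d - b * c = 1 ∧ ((a : ℂ) * z + b) / ((c : ℂ) * z + d) = w

/-- The ramification index `e_z`: `2` at points equivalent to `i`, `3` at points
equivalent to `ρ = e^{iπ/3}`, and `1` otherwise. -/
def eWeight (z : ℂ) : ℚ :=
  if ModEquiv z Complex.I then 2
  else if ModEquiv z (Complex.exp (Real.pi * Complex.I / 3)) then 3
  else 1

/-- The order of vanishing of `f` at `z` (junk value `0` if `f` vanishes to
infinite order at `z`). -/
def zorder (f : ℂ → ℂ) (z : ℂ) : ℕ := sInf {n : ℕ | iteratedDeriv n f z ≠ 0}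

/-- `f` is the basis element `f_{k,m}` of the space of weakly holomorphic modular
forms of weight `k`: it is weakly modular of weight `k`, holomorphic on `ℍ`, and has
`q`-expansion `q^{-m} + O(q^{ℓ+1})` with coefficients `c`. -/
def IsGapForm (k : ℕ) (m : ℤ) (f : ℂ → ℂ) (c : ℤ → ℂ) : Prop :=
  DifferentiableOn ℂ f UHP ∧ IsWeaklyModular k f ∧
  (∀ z ∈ UHP, HasSum (fun n : ℕ => c (-m + n) * Complex.exp (twoPiI * ((-m + n : ℤ) : ℂ) * z)) (f z)) ∧
  c (-m) = 1 ∧ (∀ n : ℤ, -m < n → n ≤ (ell k : ℤ) → c n = 0)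

/-- The kernel function `H₁(τ,z)` of Duke–Jenkins type, for weight `k` and index `m`. -/
def H1 (k : ℕ) (m : ℤ) (τ z : ℂ) : ℂ :=
  -(1 / twoPiI) * (Disc z ^ ell k / (Disc τ ^ ell k * Ek (kres k) τ)) *
    ((ell k : ℂ) * E2 z * Ek (kres k) z + Dop (Ek (kres k)) z) *
    (deriv jfun τ / (jfun τ - jfun z)) * Complex.exp (-(twoPiI * m * τ))

/-- The kernel function `H₂(τ,z)`, for weight `k` and index `m`. -/
def H2 (k : ℕ) (m : ℤ) (τ z : ℂ) : ℂ :=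
  (1 / (4 * (Real.pi : ℂ) ^ 2)) *
    (Disc z ^ ell k * Ek (kres k) z / (Disc τ ^ ell k * Ek (kres k) τ)) *
    (deriv jfun z * deriv jfun τ / (jfun τ - jfun z) ^ 2) * Complex.exp (-(twoPiI * m * τ))

/-- The kernel function `H(τ,z) = H₁(τ,z) + H₂(τ,z)`. -/
def Hfun (k : ℕ) (m : ℤ) (τ z : ℂ) : ℂ := H1 k m τ z + H2 k m τ z

end


section AuxZ

lemma auxZ_tendsto_atTop (m : ℤ) (c : ℝ) (hc : 0 < c) :
    Tendsto (fun t : ℝ => t ^ m * Real.exp (-(c * t))) atTop (𝓝 0) := by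
  set n : ℕ := m.toNat with hn
  have h1 : Tendsto (fun t : ℝ => (c ^ n)⁻¹ * ((c * t) ^ n * Real.exp (-(c * t)))) atTop (𝓝 0) := by
    have := (Real.tendsto_pow_mul_exp_neg_atTop_nhds_zero n).comp
      (Tendsto.const_mul_atTop hc tendsto_id)
    simpa using this.const_mul ((c ^ n)⁻¹)
  have h2 : Tendsto (fun t : ℝ => t ^ n * Real.exp (-(c * t))) atTop (𝓝 0) := by
    refine h1.congr fun t => ?_
    rw [mul_pow]
    field_simp
  refine squeeze_zero_norm' ?_ h2
  filter_upwards [eventually_ge_atTop (1 : ℝ)] with t ht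
  have ht0 : (0:ℝ) < t := lt_of_lt_of_le one_pos ht
  have hle : t ^ m ≤ t ^ (n : ℤ) := zpow_le_zpow_right₀ ht (Int.self_le_toNat m)
  have hpos : (0:ℝ) < t ^ m := zpow_pos ht0 m
  rw [Real.norm_eq_abs, abs_mul, abs_of_pos hpos, abs_of_pos (Real.exp_pos _)]
  rw [← zpow_natCast t n]
  exact mul_le_mul_of_nonneg_right hle (Real.exp_pos _).le

lemma auxZ_tendsto_zero (m : ℤ) (c : ℝ) (hc : 0 < c) :
    Tendsto (fun y : ℝ => y ^ m * Real.exp (-c / y)) (𝓝[>] (0:ℝ)) (𝓝 0) := by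
  have h1 := (auxZ_tendsto_atTop (-m) c hc).comp tendsto_inv_nhdsGT_zero
  refine h1.congr' ?_
  filter_upwards [self_mem_nhdsWithin] with y (hy : 0 < y)
  simp only [Function.comp]
  rw [zpow_neg, inv_zpow, inv_inv, neg_div, div_eq_mul_inv]


lemma auxZ_extr_pos (φ dφ : ℝ → ℂ)
    (hφ : ∀ y : ℝ, 0 < y → HasDerivAt φ (dφ y) y)
    (him : ∀ y : ℝ, 0 < y → (φ y).im = 0)
    (h0 : Tendsto φ (𝓝[>] (0:ℝ)) (𝓝 0))
    (htop : Tendsto φ atTop (𝓝 0))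
    (y1 : ℝ) (hy1 : 0 < y1) (hpos : 0 < (φ y1).re) :
    ∃ y : ℝ, 0 < y ∧ dφ y = 0 := by
  set h : ℝ → ℝ := fun y => (φ y).re with hh
  set a : ℝ := (φ y1).re with ha
  have hh0 : Tendsto h (𝓝[>] (0:ℝ)) (𝓝 0) := by
    have := (Complex.continuous_re.tendsto 0).comp h0
    exact this
  have hhtop : Tendsto h atTop (𝓝 0) := by
    have := (Complex.continuous_re.tendsto 0).comp htop
    exact this
  have hev0 : ∀ᶠ y in 𝓝[>] (0:ℝ), |h y| < a := by
    have := Metric.tendsto_nhds.mp hh0 a hpos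
    simpa [Real.dist_eq] using this
  obtain ⟨δ, hδ0, hδ⟩ := mem_nhdsGT_iff_exists_Ioo_subset.mp hev0
  have hevtop : ∀ᶠ y in atTop, |h y| < a := by
    have := Metric.tendsto_nhds.mp hhtop a hpos
    simpa [Real.dist_eq] using this
  obtain ⟨Y, hY⟩ := eventually_atTop.mp hevtop
  set b : ℝ := min (δ / 2) y1 with hb
  set B : ℝ := max Y y1 with hB
  have hbpos : 0 < b := lt_min (by linarith [Set.mem_Ioi.mp hδ0]) hy1
  have hy1mem : y1 ∈ Set.Icc b B := ⟨min_le_right _ _, le_max_right _ _⟩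
  have hcont : ContinuousOn h (Set.Icc b B) := by
    intro y hy
    have hy0 : 0 < y := lt_of_lt_of_le hbpos hy.1
    exact (Complex.continuous_re.continuousAt.comp (hφ y hy0).continuousAt).continuousWithinAt
  obtain ⟨y0, hy0mem, hy0max⟩ := isCompact_Icc.exists_isMaxOn ⟨y1, hy1mem⟩ hcont
  have hy0pos : 0 < y0 := lt_of_lt_of_le hbpos hy0mem.1
  have hay0 : a ≤ h y0 := hy0max hy1mem
  have hglobal : ∀ y : ℝ, 0 < y → h y ≤ h y0 := by
    intro y hy
    by_cases h1 : y ∈ Set.Icc b B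
    · exact hy0max h1
    · rcases not_and_or.mp h1 with h2 | h2
      · push_neg at h2
        have hyδ : y ∈ Set.Ioo 0 δ := ⟨hy, by
          have : b ≤ δ / 2 := min_le_left _ _
          linarith⟩
        have := hδ hyδ
        have := calc h y ≤ |h y| := le_abs_self _
          _ < a := this
          _ ≤ h y0 := hay0
        exact this.le
      · push_neg at h2
        have hyY : Y ≤ y := le_of_lt (lt_of_le_of_lt (le_max_left _ _) h2)
        have := calc h y ≤ |h y| := le_abs_self _
          _ < a := hY y hyY
          _ ≤ h y0 := hay0
        exact this.le
  have hlmax : IsLocalMax h y0 := by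
    filter_upwards [isOpen_Ioi.mem_nhds (Set.mem_Ioi.mpr hy0pos)] with y hy
    exact hglobal y hy
  have hre : HasDerivAt h ((dφ y0).re) y0 :=
    Complex.reCLM.hasFDerivAt.comp_hasDerivAt y0 (hφ y0 hy0pos)
  have hre0 : (dφ y0).re = 0 := hlmax.hasDerivAt_eq_zero hre
  have himder : HasDerivAt (fun y => (φ y).im) ((dφ y0).im) y0 :=
    Complex.imCLM.hasFDerivAt.comp_hasDerivAt y0 (hφ y0 hy0pos)
  have heq : (fun _ : ℝ => (0:ℝ)) =ᶠ[𝓝 y0] (fun y => (φ y).im) := by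
    filter_upwards [isOpen_Ioi.mem_nhds (Set.mem_Ioi.mpr hy0pos)] with y hy
    exact (him y hy).symm
  have him0 : (dφ y0).im = 0 :=
    (himder.congr_of_eventuallyEq heq).unique (hasDerivAt_const y0 0)
  exact ⟨y0, hy0pos, Complex.ext hre0 him0⟩

lemma auxZ_extr (φ dφ : ℝ → ℂ)
    (hφ : ∀ y : ℝ, 0 < y → HasDerivAt φ (dφ y) y)
    (him : ∀ y : ℝ, 0 < y → (φ y).im = 0)
    (h0 : Tendsto φ (𝓝[>] (0:ℝ)) (𝓝 0))
    (htop : Tendsto φ atTop (𝓝 0))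
    (y1 : ℝ) (hy1 : 0 < y1) (hne : φ y1 ≠ 0) :
    ∃ y : ℝ, 0 < y ∧ dφ y = 0 := by
  have hrene : (φ y1).re ≠ 0 := by
    intro h
    exact hne (Complex.ext h (him y1 hy1))
  rcases hrene.lt_or_gt with hlt | hgt
  · obtain ⟨y, hy, hd⟩ := auxZ_extr_pos (fun y => -φ y) (fun y => -dφ y)
      (fun y hy => (hφ y hy).neg) (fun y hy => by simp [him y hy])
      (by simpa using h0.neg) (by simpa using htop.neg) y1 hy1 (by simpa using hlt)
    exact ⟨y, hy, neg_eq_zero.mp hd⟩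
  · exact auxZ_extr_pos φ dφ hφ him h0 htop y1 hy1 hgt

end AuxZ

/-- If `g` is a nonzero cusp form of even weight `k - 2` with real
Fourier coefficients, then `f = Dg` has a zero on the central line `Re z = 0` and a
zero on the line `Re z = 1/2`. -/
theorem stmt3 (k : ℤ) (hke : Even k) (g : ℂ → ℂ) (c : ℕ → ℝ)
    (hg : IsModularForm (k - 2) g (fun n => ((c n : ℝ) : ℂ)))
    (hcusp : c 0 = 0) (hne : ∃ n, c n ≠ 0) :
    (∃ y : ℝ, 0 < y ∧ Dop g (Complex.I * y) = 0) ∧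
    (∃ y : ℝ, 0 < y ∧ Dop g ((1/2 : ℂ) + Complex.I * y) = 0) := by
  obtain ⟨hdiff, hwm, hq⟩ := hg
  have hπ : (0:ℝ) < Real.pi := Real.pi_pos
  have hopen : IsOpen UHP := by
    have : UHP = Complex.im ⁻¹' Set.Ioi 0 := rfl
    rw [this]
    exact isOpen_Ioi.preimage Complex.continuous_im
  have hmem : ∀ (x y : ℝ), 0 < y → ((x:ℂ) + Complex.I * y) ∈ UHP := by
    intro x y hy
    show 0 < ((x:ℂ) + Complex.I * y).im
    simp [hy]
  -- exponent computation
  have hexp : ∀ (n : ℕ) (x y : ℝ), twoPiI * n * ((x:ℂ) + Complex.I * y)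
      = Complex.I * ((2*Real.pi*n*x : ℝ) : ℂ) + ((-(2*Real.pi*n*y) : ℝ) : ℂ) := by
    intro n x y
    apply Complex.ext <;>
      simp [twoPiI, Complex.mul_re, Complex.mul_im] <;> ring
  have hnorm : ∀ (n : ℕ) (x y : ℝ),
      ‖((c n : ℝ) : ℂ) * Complex.exp (twoPiI * n * ((x:ℂ) + Complex.I * y))‖
        = |c n| * Real.exp (-(2*Real.pi*n*y)) := by
    intro n x y
    rw [norm_mul, Complex.norm_exp, hexp,
      Complex.norm_real, Real.norm_eq_abs]
    congr 1
    simp [Complex.add_re, Complex.mul_re]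
  -- summability of coefficients
  set A : ℕ → ℝ := fun n => |c n| * Real.exp (-(2*Real.pi*n)) with hAdef
  have hA : Summable A := by
    have h1 := (hq _ (hmem 0 1 one_pos)).summable
    have h2 := summable_norm_iff.mpr h1
    refine h2.congr fun n => ?_
    rw [hnorm n 0 1]
    simp [hAdef]
  have hApos : ∀ n, 0 ≤ A n := fun n => mul_nonneg (abs_nonneg _) (Real.exp_pos _).le
  set SA : ℝ := ∑' n, A n with hSAdef
  have hSA0 : 0 ≤ SA := tsum_nonneg hApos
  -- key tail bound
  have key : ∀ (N : ℕ), (∀ i, i < N → c i = 0) → ∀ (x y : ℝ), 1 ≤ y →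
      ‖g ((x:ℂ) + Complex.I*y) - ((c N : ℝ):ℂ) * Complex.exp (twoPiI * N * ((x:ℂ)+Complex.I*y))‖
        ≤ SA * Real.exp (-(2*Real.pi*(N+1)) * (y-1)) := by
    intro N hvan x y hy1
    have hy0 : (0:ℝ) < y := lt_of_lt_of_le one_pos hy1
    set z : ℂ := (x:ℂ) + Complex.I*y with hzdef
    set f : ℕ → ℂ := fun n => ((c n : ℝ):ℂ) * Complex.exp (twoPiI * n * z) with hfdef
    have hz : HasSum f (g z) := hq z (hmem x y hy0)
    have hsumfin : ∑ i ∈ Finset.range (N+1), f i = f N := by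
      rw [Finset.sum_range_succ, Finset.sum_eq_zero, zero_add]
      intro i hi
      simp [hfdef, hvan i (Finset.mem_range.mp hi)]
    have htail : HasSum (fun n => f (n + (N+1))) (g z - f N) := by
      refine (hasSum_nat_add_iff (N+1)).mpr ?_
      rw [hsumfin, sub_add_cancel]
      exact hz
    have hterm : ∀ n : ℕ, ‖f (n + (N+1))‖
        ≤ A (n + (N+1)) * Real.exp (-(2*Real.pi*(N+1)) * (y-1)) := by
      intro n
      rw [hfdef]
      rw [hnorm (n + (N+1)) x y, hAdef]
      simp only []
      rw [mul_assoc (|c (n + (N+1))|), ← Real.exp_add]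
      refine mul_le_mul_of_nonneg_left (Real.exp_le_exp.mpr ?_) (abs_nonneg _)
      have hm : ((N:ℝ)+1) ≤ ((n + (N+1) : ℕ) : ℝ) := by
        push_cast
        linarith [Nat.cast_nonneg (α := ℝ) n]
      have hy1' : (0:ℝ) ≤ y - 1 := by linarith
      nlinarith [mul_le_mul_of_nonneg_right hm hy1', Nat.cast_nonneg (α := ℝ) (n + (N+1))]
    have hsummtail : Summable (fun n => ‖f (n + (N+1))‖) :=
      summable_norm_iff.mpr htail.summable
    have hAshift : Summable (fun n => A (n + (N+1))) := (summable_nat_add_iff (N+1)).mpr hA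
    have hAsumm : Summable (fun n => A (n + (N+1)) * Real.exp (-(2*Real.pi*(N+1)) * (y-1))) :=
      hAshift.mul_right _
    have hSigle : (∑' n, A (n + (N+1))) ≤ SA := by
      refine Summable.tsum_le_tsum_of_inj (fun n => n + (N+1)) (add_left_injective (N+1))
        (fun m _ => hApos m) (fun i => le_refl _) hAshift hA
    calc ‖g z - f N‖ = ‖∑' n, f (n + (N+1))‖ := by rw [htail.tsum_eq]
      _ ≤ ∑' n, ‖f (n + (N+1))‖ := norm_tsum_le_tsum_norm hsummtail
      _ ≤ ∑' n, A (n + (N+1)) * Real.exp (-(2*Real.pi*(N+1)) * (y-1)) :=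
          Summable.tsum_le_tsum hterm hsummtail hAsumm
      _ = (∑' n, A (n + (N+1))) * Real.exp (-(2*Real.pi*(N+1)) * (y-1)) := tsum_mul_right
      _ ≤ SA * Real.exp (-(2*Real.pi*(N+1)) * (y-1)) :=
          mul_le_mul_of_nonneg_right hSigle (Real.exp_pos _).le
  have key0 : ∀ (x y : ℝ), 1 ≤ y →
      ‖g ((x:ℂ) + Complex.I*y)‖ ≤ SA * Real.exp (-(2*Real.pi) * (y-1)) := by
    intro x y hy
    have h := key 0 (fun i hi => absurd hi (Nat.not_lt_zero i)) x y hy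
    simpa [hcusp] using h
  -- decay at infinity, uniformly on vertical lines
  have htopline : ∀ x : ℝ, Tendsto (fun y : ℝ => g ((x:ℂ) + Complex.I*y)) atTop (𝓝 0) := by
    intro x
    refine squeeze_zero_norm' (a := fun y => SA * Real.exp (-(2*Real.pi) * (y-1))) ?_ ?_
    · filter_upwards [eventually_ge_atTop (1:ℝ)] with y hy using key0 x y hy
    · have h2 : Tendsto (fun y:ℝ => (2*Real.pi)*(y-1)) atTop atTop := by
        refine Tendsto.const_mul_atTop (by positivity) ?_
        simpa [sub_eq_add_neg] using tendsto_atTop_add_const_right atTop (-1 : ℝ) tendsto_id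
      have h1 : Tendsto (fun y:ℝ => -(2*Real.pi) * (y-1)) atTop atBot := by
        refine (tendsto_neg_atTop_atBot.comp h2).congr fun y => ?_
        simp [Function.comp]
      have := (Real.tendsto_exp_atBot.comp h1).const_mul SA
      simpa using this
  -- modular transformation relations
  have hrel1 : ∀ y : ℝ, 0 < y →
      g ((0:ℂ) + Complex.I * ((y⁻¹ : ℝ) : ℂ)) =
        (Complex.I * (y:ℂ))^(k-2) * g ((0:ℂ) + Complex.I * (y:ℂ)) := by
    intro y hy
    have hyne : (y:ℂ) ≠ 0 := Complex.ofReal_ne_zero.mpr hy.ne'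
    have h := hwm 0 (-1) 1 0 (by norm_num) ((0:ℂ) + Complex.I * (y:ℂ)) (by simpa using hmem 0 y hy)
    have e1 : (((0:ℤ):ℂ) * ((0:ℂ) + Complex.I * (y:ℂ)) + ((-1:ℤ):ℂ)) /
        (((1:ℤ):ℂ) * ((0:ℂ) + Complex.I * (y:ℂ)) + ((0:ℤ):ℂ)) =
        (0:ℂ) + Complex.I * ((y⁻¹ : ℝ) : ℂ) := by
      push_cast
      simp only [zero_mul, one_mul, zero_add, add_zero]
      rw [div_eq_iff (mul_ne_zero Complex.I_ne_zero hyne)]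
      have h2 : Complex.I * (↑y)⁻¹ * (Complex.I * ↑y) = Complex.I^2 * ((↑y)⁻¹ * ↑y) := by ring
      rw [h2, Complex.I_sq, inv_mul_cancel₀ hyne]
      ring
    have e2 : (((1:ℤ):ℂ) * ((0:ℂ) + Complex.I * (y:ℂ)) + ((0:ℤ):ℂ)) = Complex.I * (y:ℂ) := by
      push_cast
      ring
    rw [e1, e2] at h
    exact h
  have hrel2 : ∀ y : ℝ, 0 < y →
      g (((1/2 : ℝ):ℂ) + Complex.I * (((4*y)⁻¹ : ℝ) : ℂ)) =
        (Complex.I * ((2*y : ℝ):ℂ))^(k-2) * g (((1/2:ℝ):ℂ) + Complex.I * (y:ℂ)) := by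
    intro y hy
    have hyne : (y:ℂ) ≠ 0 := Complex.ofReal_ne_zero.mpr hy.ne'
    have h := hwm 1 (-1) 2 (-1) (by norm_num) (((1/2:ℝ):ℂ) + Complex.I * (y:ℂ))
      (hmem (1/2) y hy)
    have hdenne : ((2:ℂ)) * (((1/2:ℝ):ℂ) + Complex.I * (y:ℂ)) + (-1:ℂ) ≠ 0 := by
      have e : ((2:ℂ)) * (((1/2:ℝ):ℂ) + Complex.I * (y:ℂ)) + (-1:ℂ) = Complex.I * (2*(y:ℂ)) := by
        push_cast
        ring
      rw [e]
      exact mul_ne_zero Complex.I_ne_zero (by simpa using hyne)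
    have e1 : (((1:ℤ):ℂ) * (((1/2:ℝ):ℂ) + Complex.I * (y:ℂ)) + ((-1:ℤ):ℂ)) /
        (((2:ℤ):ℂ) * (((1/2:ℝ):ℂ) + Complex.I * (y:ℂ)) + ((-1:ℤ):ℂ)) =
        ((1/2 : ℝ):ℂ) + Complex.I * (((4*y)⁻¹ : ℝ) : ℂ) := by
      rw [div_eq_iff (by push_cast at hdenne ⊢; exact hdenne)]
      push_cast
      have h4 : ((4:ℂ) * (y:ℂ)) ≠ 0 := by
        intro hcon
        apply hyne
        have := mul_eq_zero.mp hcon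
        rcases this with h' | h'
        · norm_num at h'
        · exact h'
      field_simp
      ring_nf
      rw [Complex.I_sq]
      ring
    have e2 : (((2:ℤ):ℂ) * (((1/2:ℝ):ℂ) + Complex.I * (y:ℂ)) + ((-1:ℤ):ℂ)) =
        Complex.I * ((2*y : ℝ):ℂ) := by
      push_cast
      ring
    rw [e1, e2] at h
    exact h
  -- decay at the real line
  have hnormIy : ∀ r : ℝ, 0 < r → ‖Complex.I * (r:ℂ)‖ = r := by
    intro r hr
    rw [norm_mul, Complex.norm_I, Complex.norm_real,
      one_mul, Real.norm_eq_abs, abs_of_pos hr]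
  have h0line1 : Tendsto (fun y : ℝ => g ((0:ℂ) + Complex.I*(y:ℂ))) (𝓝[>] (0:ℝ)) (𝓝 0) := by
    refine squeeze_zero_norm'
      (a := fun y => (SA * Real.exp (2*Real.pi)) * (y^(2-k) * Real.exp (-(2*Real.pi)/y))) ?_ ?_
    · filter_upwards [Ioo_mem_nhdsGT_of_mem (Set.left_mem_Ico.mpr one_pos)] with y hy
      have hy0 : (0:ℝ) < y := hy.1
      have hyne : (y:ℂ) ≠ 0 := Complex.ofReal_ne_zero.mpr hy0.ne'
      have hy1 : (1:ℝ) ≤ y⁻¹ := by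
        rw [le_inv_comm₀ one_pos hy0]
        simpa using hy.2.le
      have hbase : (Complex.I * (y:ℂ)) ≠ 0 := mul_ne_zero Complex.I_ne_zero hyne
      have hzp : (Complex.I * (y:ℂ))^(k-2) ≠ 0 := zpow_ne_zero _ hbase
      have heq : g ((0:ℂ) + Complex.I*(y:ℂ)) =
          ((Complex.I * (y:ℂ))^(k-2))⁻¹ * g ((0:ℂ) + Complex.I * ((y⁻¹ : ℝ) : ℂ)) := by
        rw [hrel1 y hy0, inv_mul_cancel_left₀ hzp]
      rw [heq, norm_mul, norm_inv, norm_zpow, hnormIy y hy0]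
      have hb := key0 0 (y⁻¹) hy1
      have hbnd : ‖g ((0:ℂ) + Complex.I * ((y⁻¹ : ℝ) : ℂ))‖
          ≤ SA * Real.exp (-(2*Real.pi) * (y⁻¹-1)) := hb
      calc (y^(k-2))⁻¹ * ‖g ((0:ℂ) + Complex.I * ((y⁻¹ : ℝ) : ℂ))‖
          ≤ (y^(k-2))⁻¹ * (SA * Real.exp (-(2*Real.pi) * (y⁻¹-1))) := by
            refine mul_le_mul_of_nonneg_left hbnd ?_
            positivity
        _ = (SA * Real.exp (2*Real.pi)) * (y^(2-k) * Real.exp (-(2*Real.pi)/y)) := by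
            rw [← zpow_neg, neg_sub]
            have : Real.exp (-(2*Real.pi) * (y⁻¹-1)) =
                Real.exp (2*Real.pi) * Real.exp (-(2*Real.pi)/y) := by
              rw [← Real.exp_add]
              congr 1
              field_simp
              ring
            rw [this]
            ring
    · have := (auxZ_tendsto_zero (2-k) (2*Real.pi) (by positivity)).const_mul
        (SA * Real.exp (2*Real.pi))
      simpa using this
  have h0line2 : Tendsto (fun y : ℝ => g (((1/2:ℝ):ℂ) + Complex.I*(y:ℂ))) (𝓝[>] (0:ℝ)) (𝓝 0) := by
    refine squeeze_zero_norm'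
      (a := fun y => (SA * Real.exp (2*Real.pi) * (2:ℝ)^(2-k)) *
        (y^(2-k) * Real.exp (-(Real.pi/2)/y))) ?_ ?_
    · filter_upwards [Ioo_mem_nhdsGT_of_mem (Set.left_mem_Ico.mpr (by norm_num : (0:ℝ) < 1/4))]
        with y hy
      have hy0 : (0:ℝ) < y := hy.1
      have h2y0 : (0:ℝ) < 2*y := by linarith
      have hyne : ((2*y : ℝ):ℂ) ≠ 0 := Complex.ofReal_ne_zero.mpr h2y0.ne'
      have hy1 : (1:ℝ) ≤ (4*y)⁻¹ := by
        rw [le_inv_comm₀ one_pos (by linarith)]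
        simpa using by linarith [hy.2]
      have hbase : (Complex.I * ((2*y:ℝ):ℂ)) ≠ 0 := mul_ne_zero Complex.I_ne_zero hyne
      have hzp : (Complex.I * ((2*y:ℝ):ℂ))^(k-2) ≠ 0 := zpow_ne_zero _ hbase
      have heq : g (((1/2:ℝ):ℂ) + Complex.I*(y:ℂ)) =
          ((Complex.I * ((2*y:ℝ):ℂ))^(k-2))⁻¹ *
            g (((1/2:ℝ):ℂ) + Complex.I * (((4*y)⁻¹ : ℝ) : ℂ)) := by
        rw [hrel2 y hy0, inv_mul_cancel_left₀ hzp]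
      rw [heq, norm_mul, norm_inv, norm_zpow, hnormIy (2*y) h2y0]
      have hbnd : ‖g (((1/2:ℝ):ℂ) + Complex.I * (((4*y)⁻¹ : ℝ) : ℂ))‖
          ≤ SA * Real.exp (-(2*Real.pi) * ((4*y)⁻¹-1)) := key0 (1/2) ((4*y)⁻¹) hy1
      calc ((2*y)^(k-2))⁻¹ * ‖g (((1/2:ℝ):ℂ) + Complex.I * (((4*y)⁻¹ : ℝ) : ℂ))‖
          ≤ ((2*y)^(k-2))⁻¹ * (SA * Real.exp (-(2*Real.pi) * ((4*y)⁻¹-1))) := by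
            refine mul_le_mul_of_nonneg_left hbnd ?_
            positivity
        _ = (SA * Real.exp (2*Real.pi) * (2:ℝ)^(2-k)) *
            (y^(2-k) * Real.exp (-(Real.pi/2)/y)) := by
            rw [← zpow_neg, neg_sub, mul_zpow]
            have : Real.exp (-(2*Real.pi) * ((4*y)⁻¹-1)) =
                Real.exp (2*Real.pi) * Real.exp (-(Real.pi/2)/y) := by
              rw [← Real.exp_add]
              congr 1
              field_simp
              ring
            rw [this]
            ring
    · have := (auxZ_tendsto_zero (2-k) (Real.pi/2) (by positivity)).const_mul
        (SA * Real.exp (2*Real.pi) * (2:ℝ)^(2-k))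
      simpa using this
  -- a common point of nonvanishing on both lines
  classical
  set n0 : ℕ := Nat.find hne with hn0def
  have hcn0 : c n0 ≠ 0 := Nat.find_spec hne
  have habs : (0:ℝ) < |c n0| := abs_pos.mpr hcn0
  have hvan : ∀ i, i < n0 → c i = 0 := fun i hi => of_not_not (Nat.find_min hne hi)
  have hevsmall : ∀ᶠ y in atTop,
      SA * Real.exp (2*Real.pi*(n0+1)) * Real.exp (-(2*Real.pi)*y) < |c n0| := by
    have h2 : Tendsto (fun y:ℝ => (2*Real.pi)*y) atTop atTop :=
      Tendsto.const_mul_atTop (by positivity) tendsto_id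
    have h1 : Tendsto (fun y:ℝ => -(2*Real.pi) * y) atTop atBot := by
      refine (tendsto_neg_atTop_atBot.comp h2).congr fun y => ?_
      simp [Function.comp]
    have h3 := (Real.tendsto_exp_atBot.comp h1).const_mul (SA * Real.exp (2*Real.pi*(n0+1)))
    simp only [mul_zero, Function.comp] at h3
    exact h3.eventually_lt_const habs
  obtain ⟨y2, hy2⟩ := (hevsmall.and (eventually_ge_atTop (1:ℝ))).exists
  obtain ⟨hy2lt, hy2ge⟩ := hy2
  have hy2pos : (0:ℝ) < y2 := lt_of_lt_of_le one_pos hy2ge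
  have hnz : ∀ x : ℝ, g ((x:ℂ) + Complex.I*(y2:ℂ)) ≠ 0 := by
    intro x hg0
    have hk := key n0 hvan x y2 hy2ge
    rw [hg0, zero_sub, norm_neg, hnorm n0 x y2] at hk
    have hsplit : Real.exp (-(2*Real.pi*(n0+1)) * (y2-1)) =
        Real.exp (2*Real.pi*(n0+1)) * Real.exp (-(2*Real.pi)*y2) * Real.exp (-(2*Real.pi*n0*y2)) := by
      rw [← Real.exp_add, ← Real.exp_add]
      congr 1
      push_cast
      ring
    rw [hsplit] at hk
    have hlt : SA * (Real.exp (2*Real.pi*(n0+1)) * Real.exp (-(2*Real.pi)*y2) *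
        Real.exp (-(2*Real.pi*n0*y2))) < |c n0| * Real.exp (-(2*Real.pi*n0*y2)) := by
      rw [← mul_assoc, ← mul_assoc]
      exact mul_lt_mul_of_pos_right hy2lt (Real.exp_pos _)
    linarith
  -- reality of g on the two lines
  have hexpval : ∀ (n : ℕ) (x y : ℝ), Complex.exp (twoPiI * n * ((x:ℂ) + Complex.I * y)) =
      Complex.exp (Complex.I * ((2*Real.pi*n*x : ℝ) : ℂ)) * ((Real.exp (-(2*Real.pi*n*y)) : ℝ) : ℂ) := by
    intro n x y
    rw [hexp n x y, Complex.exp_add, Complex.ofReal_exp]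
  have him1 : ∀ y : ℝ, 0 < y → (g (((0:ℝ):ℂ) + Complex.I*(y:ℂ))).im = 0 := by
    intro y hy
    have hs := Complex.hasSum_im (hq _ (hmem 0 y hy))
    have h0s : (fun n : ℕ => (((c n : ℝ):ℂ) * Complex.exp (twoPiI * n * (((0:ℝ):ℂ) + Complex.I*(y:ℂ)))).im)
        = fun _ => (0:ℝ) := by
      funext n
      rw [hexpval n 0 y]
      have hz : (2*Real.pi*(n:ℝ)*(0:ℝ)) = 0 := by ring
      rw [hz, Complex.ofReal_zero, mul_zero, Complex.exp_zero, one_mul,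
        ← Complex.ofReal_mul]
      exact Complex.ofReal_im _
    rw [h0s] at hs
    exact hs.unique hasSum_zero
  have him2 : ∀ y : ℝ, 0 < y → (g (((1/2:ℝ):ℂ) + Complex.I*(y:ℂ))).im = 0 := by
    intro y hy
    have hs := Complex.hasSum_im (hq _ (hmem (1/2) y hy))
    have h0s : (fun n : ℕ => (((c n : ℝ):ℂ) * Complex.exp (twoPiI * n * (((1/2:ℝ):ℂ) + Complex.I*(y:ℂ)))).im)
        = fun _ => (0:ℝ) := by
      funext n
      rw [hexpval n (1/2) y]
      have : Complex.I * ((2*Real.pi*n*(1/2:ℝ) : ℝ) : ℂ) = (n:ℂ) * ((Real.pi:ℂ) * Complex.I) := by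
        push_cast
        ring
      rw [this, Complex.exp_nat_mul, Complex.exp_pi_mul_I]
      have hre : ((-1:ℂ))^n = (((-1:ℝ)^n : ℝ) : ℂ) := by
        push_cast
        ring
      rw [hre]
      rw [← Complex.ofReal_mul, ← Complex.ofReal_mul]
      exact Complex.ofReal_im _
    rw [h0s] at hs
    exact hs.unique hasSum_zero
  -- derivatives along vertical lines
  have hder : ∀ (x : ℝ) (y : ℝ), 0 < y →
      HasDerivAt (fun t : ℝ => g ((x:ℂ) + Complex.I * (t:ℂ)))
        (deriv g ((x:ℂ) + Complex.I*(y:ℂ)) * Complex.I) y := by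
    intro x y hy
    have h1 : HasDerivAt (fun t : ℝ => (x:ℂ) + Complex.I * (t:ℂ)) Complex.I y := by
      have h0 : HasDerivAt (fun t : ℝ => (t:ℂ)) 1 y := by
        have := Complex.ofRealCLM.hasDerivAt (x := y)
        rw [Complex.ofRealCLM_apply, Complex.ofReal_one] at this
        exact this
      simpa using (h0.const_mul Complex.I).const_add ((x:ℝ):ℂ)
    have h2 : HasDerivAt g (deriv g ((x:ℂ) + Complex.I*(y:ℂ))) ((x:ℂ) + Complex.I*(y:ℂ)) :=
      (hdiff.differentiableAt (hopen.mem_nhds (hmem x y hy))).hasDerivAt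
    exact h2.comp y h1
  -- conclusion
  constructor
  · obtain ⟨y0, hy0, hd0⟩ := auxZ_extr (fun t : ℝ => g (((0:ℝ):ℂ) + Complex.I * (t:ℂ)))
      (fun t : ℝ => deriv g (((0:ℝ):ℂ) + Complex.I*(t:ℂ)) * Complex.I)
      (fun y hy => hder 0 y hy)
      (fun y hy => him1 y hy)
      (by simpa using h0line1) (by simpa using htopline 0) y2 hy2pos
      (by simpa using hnz 0)
    refine ⟨y0, hy0, ?_⟩
    have hd : deriv g (Complex.I * (y0:ℂ)) = 0 := by
      have := (mul_eq_zero.mp hd0).resolve_right Complex.I_ne_zero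
      simpa using this
    show twoPiI⁻¹ * deriv g (Complex.I * (y0:ℂ)) = 0
    rw [hd, mul_zero]
  · obtain ⟨y0, hy0, hd0⟩ := auxZ_extr (fun t : ℝ => g (((1/2:ℝ):ℂ) + Complex.I * (t:ℂ)))
      (fun t : ℝ => deriv g (((1/2:ℝ):ℂ) + Complex.I*(t:ℂ)) * Complex.I)
      (fun y hy => hder (1/2) y hy)
      (fun y hy => him2 y hy)
      h0line2 (htopline (1/2)) y2 hy2pos (hnz (1/2))
    refine ⟨y0, hy0, ?_⟩
    have hd : deriv g ((1/2:ℂ) + Complex.I * (y0:ℂ)) = 0 := by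
      have := (mul_eq_zero.mp hd0).resolve_right Complex.I_ne_zero
      have hc12 : ((1/2:ℝ):ℂ) = (1/2:ℂ) := by push_cast; ring
      rwa [hc12] at this
    show twoPiI⁻¹ * deriv g ((1/2:ℂ) + Complex.I * (y0:ℂ)) = 0
    rw [hd, mul_zero]
end

section
/- Let f be a nonzero modular form of weight k for PSL₂(ℤ) with real Fourier coefficients. (1) Assume one of the following holds: (i) f is cuspidal and k ≡ 0 (mod 4); (ii) f is non-cuspidal, nonconstant, ε_f = −1 and k ≡ 0 (mod 4); (iii) f is non-cuspidal, nonconstant, ε_f = 1 and k ≡ 2 (mod 4). Then f has a critical point on the line {z ∈ ℍ : Re(z) = 1/2}, i.e. there exists y > 0 with f'(1/2 + iy) = 0. (2) Assume one of the following holds: (i) f is cuspidal and k ≡ 0 (mod 4); (iv) f is non-cuspidal, nonconstant, ε'_f = −1 and k ≡ 0 (mod 4); (v) f is non-cuspidal, nonconstant, ε'_f = 1 and k ≡ 2 (mod 4). Then f has a critical point on the line {z ∈ ℍ : Re(z) = 0}, i.e. there exists y > 0 with f'(iy) = 0. -/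
open Filter Topology
open scoped Classical

private lemma qasymp (r : ℕ → ℝ) (S : ℝ → ℝ)
    (hS : ∀ y : ℝ, 0 < y → HasSum (fun n : ℕ => r n * Real.exp (-(2 * Real.pi * n * y))) (S y))
    (m : ℕ) :
    Tendsto (fun y : ℝ =>
      (S y - ∑ n ∈ Finset.range m, r n * Real.exp (-(2 * Real.pi * n * y))) *
        Real.exp (2 * Real.pi * m * y))
      atTop (𝓝 (r m)) := by
  have pi_pos := Real.pi_pos
  obtain ⟨C, hC⟩ : ∃ C : ℝ, ∀ n : ℕ, |r n * Real.exp (-(2 * Real.pi * n * 1))| ≤ C := by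
    have h := ((hS 1 one_pos).summable.tendsto_atTop_zero.abs).bddAbove_range
    obtain ⟨C, hC⟩ := h
    exact ⟨C, fun n => hC ⟨n, rfl⟩⟩
  have hC0 : 0 ≤ C := le_trans (abs_nonneg _) (hC 0)
  have hrn : ∀ n : ℕ, |r n| ≤ C * Real.exp (2 * Real.pi * n) := by
    intro n
    have h1 := hC n
    rw [abs_mul, abs_of_pos (Real.exp_pos _)] at h1
    have hee : Real.exp (-(2 * Real.pi * n * 1)) * Real.exp (2 * Real.pi * n) = 1 := by
      rw [← Real.exp_add]; norm_num
    nlinarith [Real.exp_pos (2 * Real.pi * (n:ℝ)), abs_nonneg (r n),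
      Real.exp_pos (-(2 * Real.pi * (n:ℝ) * 1))]
  set F : ℝ → ℕ → ℝ := fun y n => r n * Real.exp (-(2 * Real.pi * n * y)) with hF
  have key : ∀ y : ℝ, (S y - ∑ n ∈ Finset.range m, F y n) * Real.exp (2 * Real.pi * m * y)
      = r m + (S y - ∑ n ∈ Finset.range (m+1), F y n) * Real.exp (2 * Real.pi * m * y) := by
    intro y
    rw [Finset.sum_range_succ]
    have h1 : Real.exp (-(2 * Real.pi * m * y)) * Real.exp (2 * Real.pi * m * y) = 1 := by
      rw [← Real.exp_add]; norm_num
    simp only [hF]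
    linear_combination (r m) * h1
  have tailbd : ∀ y : ℝ, 2 ≤ y →
      |(S y - ∑ n ∈ Finset.range (m+1), F y n) * Real.exp (2 * Real.pi * m * y)|
        ≤ 2 * C * Real.exp (2 * Real.pi * (m+1)) * Real.exp (-(2*Real.pi*y)) := by
    intro y hy
    have hy0 : (0:ℝ) < y := by linarith
    set x := Real.exp (-(2 * Real.pi * (y - 1))) with hx
    have hx0 : 0 < x := Real.exp_pos _
    have hxhalf : x ≤ 1/2 := by
      have h1 : (-(2 * Real.pi * (y - 1))) ≤ -1 := by nlinarith [Real.pi_gt_three]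
      have h2 := Real.exp_le_exp.2 h1
      have h3 : Real.exp (-1) ≤ 1/2 := by
        rw [Real.exp_neg, inv_le_comm₀ (Real.exp_pos _) (by norm_num)]
        have := Real.add_one_le_exp 1
        linarith
      linarith
    have hx1 : x < 1 := by linarith
    have hTS := (hasSum_nat_add_iff' (m+1)).2 (hS y hy0)
    have hterm : ∀ n : ℕ, |F y (n + (m+1))| ≤ (C * x ^ (m+1)) * x ^ n := by
      intro n
      have h1 : |F y (n + (m+1))| ≤ C * Real.exp (2 * Real.pi * (n + (m+1) : ℕ))
          * Real.exp (-(2 * Real.pi * (n + (m+1) : ℕ) * y)) := by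
        simp only [hF]
        rw [abs_mul, abs_of_pos (Real.exp_pos _), mul_assoc]
        exact mul_le_mul_of_nonneg_right (hrn _) (Real.exp_pos _).le
      have h2 : Real.exp (2 * Real.pi * (n + (m+1) : ℕ)) *
          Real.exp (-(2 * Real.pi * (n + (m+1) : ℕ) * y)) = x ^ (n + (m+1)) := by
        rw [hx, ← Real.exp_nat_mul, ← Real.exp_add]
        congr 1
        push_cast
        ring
      calc |F y (n + (m+1))| ≤ C * (Real.exp (2 * Real.pi * (n + (m+1) : ℕ))
            * Real.exp (-(2 * Real.pi * (n + (m+1) : ℕ) * y))) := by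
              rw [← mul_assoc]; exact h1
        _ = C * x ^ (n + (m+1)) := by rw [h2]
        _ = (C * x ^ (m+1)) * x ^ n := by ring
    have hg := (hasSum_geometric_of_lt_one hx0.le hx1).mul_left (C * x ^ (m+1))
    have hub := hasSum_le (fun n => (le_abs_self _).trans (hterm n)) hTS hg
    have hlb := hasSum_le (fun n => le_trans (neg_le_neg (hterm n)) (neg_abs_le _)) hg.neg hTS
    have habs : |S y - ∑ n ∈ Finset.range (m+1), F y n| ≤ C * x ^ (m+1) * (1-x)⁻¹ :=
      abs_le.2 ⟨by linarith, hub⟩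
    have hxinv : (1-x)⁻¹ ≤ 2 := by
      rw [inv_le_comm₀ (by linarith) (by norm_num)]
      linarith
    have hxe : x ^ (m+1) * Real.exp (2 * Real.pi * m * y)
        = Real.exp (2 * Real.pi * (m+1)) * Real.exp (-(2*Real.pi*y)) := by
      rw [hx, ← Real.exp_nat_mul, ← Real.exp_add, ← Real.exp_add]
      congr 1
      push_cast
      ring
    rw [abs_mul, abs_of_pos (Real.exp_pos _)]
    have e1 : |S y - ∑ n ∈ Finset.range (m+1), F y n| * Real.exp (2 * Real.pi * m * y)
        ≤ (C * x ^ (m+1) * (1-x)⁻¹) * Real.exp (2 * Real.pi * m * y) :=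
      mul_le_mul_of_nonneg_right habs (Real.exp_pos _).le
    have e2 : (C * x ^ (m+1) * (1-x)⁻¹) * Real.exp (2 * Real.pi * m * y)
        ≤ (C * x ^ (m+1) * 2) * Real.exp (2 * Real.pi * m * y) := by
      have hxp : (0:ℝ) ≤ C * x ^ (m+1) := mul_nonneg hC0 (pow_nonneg hx0.le _)
      exact mul_le_mul_of_nonneg_right
        (mul_le_mul_of_nonneg_left hxinv hxp) (Real.exp_pos _).le
    have e3 : (C * x ^ (m+1) * 2) * Real.exp (2 * Real.pi * m * y)
        = 2 * C * Real.exp (2 * Real.pi * (m+1)) * Real.exp (-(2*Real.pi*y)) := by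
      have := hxe
      nlinarith [this]
    linarith
  have h0 : Tendsto (fun y : ℝ =>
      (S y - ∑ n ∈ Finset.range (m+1), F y n) * Real.exp (2 * Real.pi * m * y))
      atTop (𝓝 0) := by
    apply squeeze_zero_norm' ((eventually_ge_atTop (2:ℝ)).mono fun y hy => tailbd y hy)
    rw [show (0:ℝ) = 2 * C * Real.exp (2 * Real.pi * (m+1)) * 0 by ring]
    apply Tendsto.const_mul
    apply Real.tendsto_exp_atBot.comp
    rw [show (fun k : ℝ => -(2 * Real.pi * k)) = (fun k : ℝ => -(2 * Real.pi * k)) from rfl]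
    apply tendsto_neg_atBot_iff.2
    exact Tendsto.const_mul_atTop (by positivity) tendsto_id
  have hfin : Tendsto (fun y : ℝ => r m + (S y - ∑ n ∈ Finset.range (m+1), F y n) *
      Real.exp (2 * Real.pi * m * y)) atTop (𝓝 (r m + 0)) := tendsto_const_nhds.add h0
  rw [add_zero] at hfin
  refine hfin.congr fun y => ?_
  rw [← key y]


private lemma sign_const (V : ℝ → ℝ) (hVc : ContinuousOn V (Set.Ioi 0))
    (h0 : ∀ y > (0:ℝ), V y ≠ 0) :
    (∀ y > (0:ℝ), 0 < V y) ∨ (∀ y > (0:ℝ), V y < 0) := by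
  by_cases h : ∀ y > (0:ℝ), 0 < V y
  · exact Or.inl h
  · push_neg at h
    obtain ⟨y1, hy1, hle⟩ := h
    have hneg : V y1 < 0 := lt_of_le_of_ne hle (h0 y1 hy1)
    right
    intro y2 hy2
    by_contra hc
    push_neg at hc
    have hpos : 0 < V y2 := lt_of_le_of_ne hc (Ne.symm (h0 y2 hy2))
    have hsub : Set.uIcc y1 y2 ⊆ Set.Ioi 0 := by
      intro x hx
      rcases Set.mem_uIcc.1 hx with ⟨h1, _⟩ | ⟨h1, _⟩
      · exact lt_of_lt_of_le hy1 h1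
      · exact lt_of_lt_of_le hy2 h1
    have hmem : (0:ℝ) ∈ Set.uIcc (V y1) (V y2) :=
      Set.mem_uIcc.2 (Or.inl ⟨hneg.le, hpos.le⟩)
    obtain ⟨y, hy, hVy⟩ := intermediate_value_uIcc (hVc.mono hsub) hmem
    exact h0 y (hsub hy) hVy

private lemma sign_helper_neg {σ L d : ℝ} (hσ : σ = 1 ∨ σ = -1) (hL : L ≠ 0) (hd : d < 0)
    (hs : σ * Real.sign (L * d) = -1) : 0 < σ * L := by
  rcases hL.lt_or_gt with h | h
  · rw [Real.sign_of_pos (by nlinarith : 0 < L * d)] at hs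
    rcases hσ with h1 | h1 <;> rw [h1] at hs ⊢ <;> nlinarith
  · rw [Real.sign_of_neg (by nlinarith : L * d < 0)] at hs
    rcases hσ with h1 | h1 <;> rw [h1] at hs ⊢ <;> nlinarith

private lemma sign_helper_pos {σ L d : ℝ} (hσ : σ = 1 ∨ σ = -1) (hL : L ≠ 0) (hd : 0 < d)
    (hs : σ * Real.sign (L * d) = -1) : σ * L < 0 := by
  rcases hL.lt_or_gt with h | h
  · rw [Real.sign_of_neg (by nlinarith : L * d < 0)] at hs
    rcases hσ with h1 | h1 <;> rw [h1] at hs ⊢ <;> nlinarith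
  · rw [Real.sign_of_pos (by nlinarith : 0 < L * d)] at hs
    rcases hσ with h1 | h1 <;> rw [h1] at hs ⊢ <;> nlinarith

private lemma critical_noncusp (U V : ℝ → ℝ) (L d σ b : ℝ) (k n₀ : ℕ) (hk : 1 ≤ k)
    (hb : 0 < b)
    (hder : ∀ y > (0:ℝ), HasDerivAt U (V y) y)
    (hVc : ContinuousOn V (Set.Ioi 0))
    (hV0 : ∀ y > (0:ℝ), V y ≠ 0)
    (htop : Tendsto U atTop (𝓝 L))
    (hasym : Tendsto (fun y => (U y - L) * Real.exp (2 * Real.pi * n₀ * y)) atTop (𝓝 d))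
    (hL : L ≠ 0) (hd0 : d ≠ 0)
    (hσ : σ = 1 ∨ σ = -1)
    (hsign : σ * Real.sign (L * d) = -1)
    (hfe : ∀ t > (0:ℝ), U (1/(b^2*t)) = σ * (b*t)^k * U t) :
    False := by
  have hU' : ∀ y > (0:ℝ), deriv U y = V y := fun y hy => (hder y hy).deriv
  have hUc : ContinuousOn U (Set.Ioi 0) := fun y hy =>
    ((hder y hy).differentiableAt).continuousAt.continuousWithinAt
  -- blow-up at small arguments
  have hfe' : (fun t : ℝ => U (1/(b^2*t))) =ᶠ[atTop] (fun t => (b*t)^k * (σ * U t)) := by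
    filter_upwards [eventually_gt_atTop (0:ℝ)] with t ht
    rw [hfe t ht]; ring
  have hpow : Tendsto (fun t : ℝ => (b*t)^k) atTop atTop :=
    (tendsto_pow_atTop (by omega : k ≠ 0)).comp (Tendsto.const_mul_atTop hb tendsto_id)
  have hσU : Tendsto (fun t : ℝ => σ * U t) atTop (𝓝 (σ * L)) := htop.const_mul σ
  have hsmall : ∀ᶠ t : ℝ in atTop, 0 < 1/(b^2*t) ∧ 1/(b^2*t) < 1 := by
    filter_upwards [eventually_gt_atTop (max 0 (1/b^2))] with t ht
    have ht0 : 0 < t := lt_of_le_of_lt (le_max_left _ _) ht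
    have ht1 : 1/b^2 < t := lt_of_le_of_lt (le_max_right _ _) ht
    constructor
    · positivity
    · rw [div_lt_one (by positivity)]
      rw [div_lt_iff₀ (by positivity)] at ht1
      nlinarith
  rcases sign_const V hVc hV0 with hpos | hneg
  · -- V > 0 : U strictly increasing
    have hmono : StrictMonoOn U (Set.Ioi 0) :=
      strictMonoOn_of_deriv_pos (convex_Ioi 0) hUc
        (by rw [interior_Ioi]; intro x hx; rw [hU' x hx]; exact hpos x hx)
    have hle : ∀ y > (0:ℝ), U y ≤ L := by
      intro y hy
      refine ge_of_tendsto htop ?_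
      filter_upwards [eventually_gt_atTop y] with t ht
      exact (hmono hy (lt_trans hy ht) ht).le
    rcases lt_or_gt_of_ne (mul_ne_zero (by rcases hσ with h|h <;> rw [h] <;> norm_num) hL :
        σ * L ≠ 0) with hneg' | hpos'
    · -- σL < 0 : sign contradiction via d ≤ 0
      have hd_le : d ≤ 0 := by
        refine le_of_tendsto hasym ?_
        filter_upwards [eventually_gt_atTop (0:ℝ)] with y hy
        have := hle y hy
        nlinarith [Real.exp_pos (2 * Real.pi * (n₀:ℝ) * y)]
      exact absurd (sign_helper_neg hσ hL (hd_le.lt_of_ne hd0) hsign) (not_lt.2 hneg'.le)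
    · -- σL > 0 : blow-up contradiction
      have hblow : Tendsto (fun t : ℝ => U (1/(b^2*t))) atTop atTop :=
        (Tendsto.atTop_mul_pos hpos' hpow hσU).congr' hfe'.symm
      obtain ⟨t, hts, htb⟩ := (hsmall.and (hblow.eventually (eventually_gt_atTop L))).exists
      exact absurd (hle _ hts.1) (not_le.2 htb)
  · -- V < 0 : U strictly decreasing
    have hanti : StrictAntiOn U (Set.Ioi 0) :=
      strictAntiOn_of_deriv_neg (convex_Ioi 0) hUc
        (by rw [interior_Ioi]; intro x hx; rw [hU' x hx]; exact hneg x hx)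
    have hge : ∀ y > (0:ℝ), L ≤ U y := by
      intro y hy
      refine le_of_tendsto htop ?_
      filter_upwards [eventually_gt_atTop y] with t ht
      exact (hanti hy (lt_trans hy ht) ht).le
    rcases lt_or_gt_of_ne (mul_ne_zero (by rcases hσ with h|h <;> rw [h] <;> norm_num) hL :
        σ * L ≠ 0) with hneg' | hpos'
    · -- σL < 0 : blow-down contradiction
      have hblow : Tendsto (fun t : ℝ => U (1/(b^2*t))) atTop atBot :=
        (Tendsto.atTop_mul_neg hneg' hpow hσU).congr' hfe'.symm
      obtain ⟨t, hts, htb⟩ := (hsmall.and (hblow.eventually (eventually_lt_atBot L))).exists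
      exact absurd (hge _ hts.1) (not_le.2 htb)
    · -- σL > 0 : sign contradiction via d ≥ 0
      have hd_ge : 0 ≤ d := by
        refine ge_of_tendsto hasym ?_
        filter_upwards [eventually_gt_atTop (0:ℝ)] with y hy
        have := hge y hy
        nlinarith [Real.exp_pos (2 * Real.pi * (n₀:ℝ) * y)]
      exact absurd (sign_helper_pos hσ hL (lt_of_le_of_ne hd_ge (Ne.symm hd0)) hsign)
        (not_lt.2 hpos'.le)

private lemma critical_cusp (U V : ℝ → ℝ) (g : ℝ → ℝ)
    (hder : ∀ y > (0:ℝ), HasDerivAt U (V y) y)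
    (hVc : ContinuousOn V (Set.Ioi 0))
    (hV0 : ∀ y > (0:ℝ), V y ≠ 0)
    (htop : Tendsto U atTop (𝓝 0))
    (hg : ∀ᶠ t : ℝ in atTop, 0 < g t ∧ g t < 1)
    (h0 : Tendsto (fun t => U (g t)) atTop (𝓝 0)) : False := by
  have hU' : ∀ y > (0:ℝ), deriv U y = V y := fun y hy => (hder y hy).deriv
  have hUc : ContinuousOn U (Set.Ioi 0) := fun y hy =>
    ((hder y hy).differentiableAt).continuousAt.continuousWithinAt
  rcases sign_const V hVc hV0 with hpos | hneg
  · have hmono : StrictMonoOn U (Set.Ioi 0) :=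
      strictMonoOn_of_deriv_pos (convex_Ioi 0) hUc
        (by rw [interior_Ioi]; intro x hx; rw [hU' x hx]; exact hpos x hx)
    have h12 : U 1 < U 2 := hmono (by norm_num) (by norm_num) (by norm_num)
    have h2 : U 2 ≤ 0 := by
      refine ge_of_tendsto htop ?_
      filter_upwards [eventually_gt_atTop (2:ℝ)] with t ht
      exact (hmono (by norm_num) (Set.mem_Ioi.2 (by linarith)) ht).le
    have h1 : 0 ≤ U 1 := by
      refine le_of_tendsto h0 ?_
      filter_upwards [hg] with t ⟨ht0, ht1⟩
      exact (hmono (Set.mem_Ioi.2 ht0) (by norm_num) ht1).le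
    linarith
  · have hanti : StrictAntiOn U (Set.Ioi 0) :=
      strictAntiOn_of_deriv_neg (convex_Ioi 0) hUc
        (by rw [interior_Ioi]; intro x hx; rw [hU' x hx]; exact hneg x hx)
    have h12 : U 2 < U 1 := hanti (by norm_num) (by norm_num) (by norm_num)
    have h2 : 0 ≤ U 2 := by
      refine le_of_tendsto htop ?_
      filter_upwards [eventually_gt_atTop (2:ℝ)] with t ht
      exact (hanti (by norm_num) (Set.mem_Ioi.2 (by linarith)) ht).le
    have h1 : U 1 ≤ 0 := by
      refine ge_of_tendsto h0 ?_
      filter_upwards [hg] with t ⟨ht0, ht1⟩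
      exact (hanti (Set.mem_Ioi.2 ht0) (by norm_num) ht1).le
    linarith


private lemma isOpen_UHP : IsOpen UHP := isOpen_lt continuous_const Complex.continuous_im

private lemma mem_UHP (x0 y : ℝ) (hy : 0 < y) : (↑x0 + Complex.I * ↑y) ∈ UHP := by
  simp [UHP, Set.mem_setOf_eq, Complex.add_im, Complex.mul_im, hy]

private lemma line_hasDerivAt (f : ℂ → ℂ) (hf : DifferentiableOn ℂ f UHP) (x0 y : ℝ)
    (hy : 0 < y) :
    HasDerivAt (fun s : ℝ => f (↑x0 + Complex.I * ↑s))
      (Complex.I * deriv f (↑x0 + Complex.I * ↑y)) y := by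
  have hz : (↑x0 + Complex.I * ↑y) ∈ UHP := mem_UHP x0 y hy
  have hdf : DifferentiableAt ℂ f (↑x0 + Complex.I * ↑y) :=
    hf.differentiableAt (isOpen_UHP.mem_nhds hz)
  have hinner : ∀ w : ℂ, HasDerivAt (fun z : ℂ => (↑x0 : ℂ) + Complex.I * z) Complex.I w := by
    intro w
    simpa using ((hasDerivAt_id w).const_mul Complex.I).const_add (↑x0 : ℂ)
  have houter : HasDerivAt (fun z : ℂ => f (↑x0 + Complex.I * z))
      (deriv f (↑x0 + Complex.I * ↑y) * Complex.I) (↑y : ℂ) := by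
    have := HasDerivAt.comp (↑y : ℂ) (hdf.hasDerivAt) (hinner (↑y : ℂ))
    simpa [Function.comp_def] using this
  have := houter.comp_ofReal
  simpa [mul_comm] using this

private lemma line_hasSum (f : ℂ → ℂ) (c : ℕ → ℝ)
    (hq : HasQExp f (fun n => ((c n : ℝ) : ℂ))) (x0 : ℝ) (r : ℕ → ℝ)
    (hexp : ∀ (n : ℕ) (y : ℝ), 0 < y →
      ((c n : ℝ) : ℂ) * Complex.exp (twoPiI * n * (↑x0 + Complex.I * ↑y))
        = ((r n * Real.exp (-(2 * Real.pi * n * y)) : ℝ) : ℂ)) :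
    ∀ y : ℝ, 0 < y →
      HasSum (fun n : ℕ => r n * Real.exp (-(2 * Real.pi * n * y)))
        ((f (↑x0 + Complex.I * ↑y)).re)
      ∧ (f (↑x0 + Complex.I * ↑y)).im = 0 := by
  intro y hy
  have h := hq _ (mem_UHP x0 y hy)
  have h2 : HasSum (fun n : ℕ => ((r n * Real.exp (-(2 * Real.pi * n * y)) : ℝ) : ℂ))
      (f (↑x0 + Complex.I * ↑y)) := by
    have heq : (fun n : ℕ => ((c n : ℝ) : ℂ) * Complex.exp (twoPiI * n * (↑x0 + Complex.I * ↑y)))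
        = fun n : ℕ => ((r n * Real.exp (-(2 * Real.pi * n * y)) : ℝ) : ℂ) :=
      funext fun n => hexp n y hy
    rw [heq] at h
    exact h
  constructor
  · have h3 := h2.mapL Complex.reCLM
    simp only [Complex.reCLM_apply, Complex.ofReal_re] at h3
    exact h3
  · have h3 := h2.mapL Complex.imCLM
    simp only [Complex.imCLM_apply, Complex.ofReal_im] at h3
    exact h3.unique hasSum_zero

private lemma line_hasDerivAt_re (f : ℂ → ℂ) (hf : DifferentiableOn ℂ f UHP) (x0 y : ℝ)
    (hy : 0 < y) :
    HasDerivAt (fun s : ℝ => (f (↑x0 + Complex.I * ↑s)).re)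
      ((Complex.I * deriv f (↑x0 + Complex.I * ↑y)).re) y := by
  have h := line_hasDerivAt f hf x0 y hy
  have := Complex.reCLM.hasFDerivAt.comp_hasDerivAt y h
  simpa [Function.comp_def] using this

private lemma line_contV (f : ℂ → ℂ) (hf : DifferentiableOn ℂ f UHP) (x0 : ℝ) :
    ContinuousOn (fun y : ℝ => (Complex.I * deriv f (↑x0 + Complex.I * ↑y)).re) (Set.Ioi 0) := by
  have hdc : ContinuousOn (deriv f) UHP := ((hf.analyticOnNhd isOpen_UHP).deriv).continuousOn
  have hline : Continuous (fun y : ℝ => (↑x0 + Complex.I * ↑y : ℂ)) := by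
    continuity
  have hmaps : Set.MapsTo (fun y : ℝ => (↑x0 + Complex.I * ↑y : ℂ)) (Set.Ioi 0) UHP :=
    fun y hy => mem_UHP x0 y hy
  exact Complex.continuous_re.comp_continuousOn
    (continuousOn_const.mul (hdc.comp hline.continuousOn hmaps))

private lemma line_deriv_zero (f : ℂ → ℂ) (hf : DifferentiableOn ℂ f UHP) (x0 : ℝ)
    (him : ∀ s : ℝ, 0 < s → (f (↑x0 + Complex.I * ↑s)).im = 0) (y : ℝ) (hy : 0 < y)
    (hV : (Complex.I * deriv f (↑x0 + Complex.I * ↑y)).re = 0) :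
    deriv f (↑x0 + Complex.I * ↑y) = 0 := by
  have h := line_hasDerivAt f hf x0 y hy
  have him' : HasDerivAt (fun s : ℝ => (f (↑x0 + Complex.I * ↑s)).im)
      ((Complex.I * deriv f (↑x0 + Complex.I * ↑y)).im) y := by
    have := Complex.imCLM.hasFDerivAt.comp_hasDerivAt y h
    simpa [Function.comp_def] using this
  have heq : (fun s : ℝ => (f (↑x0 + Complex.I * ↑s)).im) =ᶠ[𝓝 y] (fun _ => (0:ℝ)) := by
    filter_upwards [Ioi_mem_nhds hy] with s hs
    exact him s hs
  have hzero : HasDerivAt (fun s : ℝ => (f (↑x0 + Complex.I * ↑s)).im) 0 y :=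
    (hasDerivAt_const y (0:ℝ)).congr_of_eventuallyEq heq
  have himv : (Complex.I * deriv f (↑x0 + Complex.I * ↑y)).im = 0 := him'.unique hzero
  have : Complex.I * deriv f (↑x0 + Complex.I * ↑y) = 0 := by
    apply Complex.ext <;> simp [hV, himv]
  have := mul_eq_zero.1 this
  rcases this with h' | h'
  · exact absurd h' Complex.I_ne_zero
  · exact h'

private lemma exp_line0 (c : ℝ) (n : ℕ) (y : ℝ) (_hy : 0 < y) :
    ((c : ℝ) : ℂ) * Complex.exp (twoPiI * n * (↑(0:ℝ) + Complex.I * ↑y))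
      = ((c * Real.exp (-(2 * Real.pi * n * y)) : ℝ) : ℂ) := by
  have harg : twoPiI * n * (↑(0:ℝ) + Complex.I * ↑y) = ((-(2 * Real.pi * n * y) : ℝ) : ℂ) := by
    simp only [twoPiI, Complex.ofReal_zero, zero_add]
    push_cast
    ring_nf
    rw [Complex.I_sq]
    ring
  rw [harg, ← Complex.ofReal_exp]
  norm_cast

private lemma exp_linehalf (c : ℝ) (n : ℕ) (y : ℝ) (_hy : 0 < y) :
    ((c : ℝ) : ℂ) * Complex.exp (twoPiI * n * (↑(1/2:ℝ) + Complex.I * ↑y))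
      = (((-1)^n * c * Real.exp (-(2 * Real.pi * n * y)) : ℝ) : ℂ) := by
  have harg : twoPiI * n * (↑(1/2:ℝ) + Complex.I * ↑y)
      = (n : ℂ) * ((Real.pi : ℂ) * Complex.I) + ((-(2 * Real.pi * n * y) : ℝ) : ℂ) := by
    simp only [twoPiI]
    push_cast
    ring_nf
    rw [Complex.I_sq]
    ring
  rw [harg, Complex.exp_add, Complex.exp_nat_mul, Complex.exp_pi_mul_I, ← Complex.ofReal_exp]
  push_cast
  ring

private lemma fe_line0 (k : ℕ) (f : ℂ → ℂ) (hw : IsWeaklyModular k f) (t : ℝ) (ht : 0 < t) :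
    f (↑(0:ℝ) + Complex.I * ↑(1/t)) =
      Complex.I ^ k * ((t : ℂ)) ^ k * f (↑(0:ℝ) + Complex.I * ↑t) := by
  have hz : (↑(0:ℝ) + Complex.I * ↑t) ∈ UHP := mem_UHP 0 t ht
  have h := hw 0 (-1) 1 0 (by norm_num) _ hz
  have ht0 : (t : ℂ) ≠ 0 := by
    simpa using Complex.ofReal_ne_zero.2 ht.ne'
  have hd0 : ((1:ℤ) : ℂ) * (↑(0:ℝ) + Complex.I * ↑t) + ((0:ℤ) : ℂ) ≠ 0 := by
    push_cast
    simpa using mul_ne_zero Complex.I_ne_zero ht0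
  have harg : (((0:ℤ) : ℂ) * (↑(0:ℝ) + Complex.I * ↑t) + ((-1:ℤ) : ℂ)) /
      (((1:ℤ) : ℂ) * (↑(0:ℝ) + Complex.I * ↑t) + ((0:ℤ) : ℂ)) = ↑(0:ℝ) + Complex.I * ↑(1/t) := by
    rw [div_eq_iff hd0]
    push_cast
    field_simp
    ring_nf
    rw [Complex.I_sq]
    ring
  rw [harg] at h
  rw [h]
  push_cast
  rw [zpow_natCast]
  ring_nf

private lemma fe_linehalf (k : ℕ) (f : ℂ → ℂ) (hw : IsWeaklyModular k f) (t : ℝ) (ht : 0 < t) :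
    f (↑(1/2:ℝ) + Complex.I * ↑(1/(4*t))) =
      Complex.I ^ k * ((2 * t : ℝ) : ℂ) ^ k * f (↑(1/2:ℝ) + Complex.I * ↑t) := by
  have hz : (↑(1/2:ℝ) + Complex.I * ↑t) ∈ UHP := mem_UHP (1/2) t ht
  have h := hw 1 (-1) 2 (-1) (by norm_num) _ hz
  have ht0 : (t : ℂ) ≠ 0 := by
    simpa using Complex.ofReal_ne_zero.2 ht.ne'
  have hden : ((2:ℤ) : ℂ) * (↑(1/2:ℝ) + Complex.I * ↑t) + ((-1:ℤ) : ℂ) = 2 * Complex.I * ↑t := by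
    push_cast
    ring
  have hd0 : ((2:ℤ) : ℂ) * (↑(1/2:ℝ) + Complex.I * ↑t) + ((-1:ℤ) : ℂ) ≠ 0 := by
    rw [hden]
    exact mul_ne_zero (mul_ne_zero two_ne_zero Complex.I_ne_zero) ht0
  have harg : (((1:ℤ) : ℂ) * (↑(1/2:ℝ) + Complex.I * ↑t) + ((-1:ℤ) : ℂ)) /
      (((2:ℤ) : ℂ) * (↑(1/2:ℝ) + Complex.I * ↑t) + ((-1:ℤ) : ℂ))
      = ↑(1/2:ℝ) + Complex.I * ↑(1/(4*t)) := by
    rw [div_eq_iff hd0]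
    push_cast
    field_simp
    ring_nf
    rw [Complex.I_sq]
    ring
  rw [harg] at h
  rw [h, hden]
  push_cast
  rw [zpow_natCast]
  ring_nf

private lemma I_pow_mod4_0 {k : ℕ} (h : k % 4 = 0) : Complex.I ^ k = 1 := by
  obtain ⟨m, hm⟩ : 4 ∣ k := Nat.dvd_of_mod_eq_zero h
  rw [hm, pow_mul, Complex.I_pow_four, one_pow]

private lemma I_pow_mod4_2 {k : ℕ} (h : k % 4 = 2) : Complex.I ^ k = -1 := by
  have hk : k = 4 * (k / 4) + 2 := by omega
  rw [hk, pow_add, pow_mul, Complex.I_pow_four, one_pow, Complex.I_sq, one_mul]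

private lemma line_small (b : ℝ) (hb : 0 < b) :
    ∀ᶠ t : ℝ in atTop, 0 < 1/(b^2*t) ∧ 1/(b^2*t) < 1 := by
  filter_upwards [eventually_gt_atTop (max 0 (1/b^2))] with t ht
  have ht0 : 0 < t := lt_of_le_of_lt (le_max_left _ _) ht
  have ht1 : 1/b^2 < t := lt_of_le_of_lt (le_max_right _ _) ht
  constructor
  · positivity
  · rw [div_lt_one (by positivity)]
    rw [div_lt_iff₀ (by positivity)] at ht1
    nlinarith

private lemma line_cusp (k : ℕ) (f : ℂ → ℂ) (c : ℕ → ℝ)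
    (hf : DifferentiableOn ℂ f UHP)
    (hq : HasQExp f (fun n => ((c n : ℝ) : ℂ))) (x0 : ℝ) (r : ℕ → ℝ) (σ b : ℝ)
    (hb : 0 < b)
    (hexp : ∀ (n : ℕ) (y : ℝ), 0 < y →
      ((c n : ℝ) : ℂ) * Complex.exp (twoPiI * n * (↑x0 + Complex.I * ↑y))
        = ((r n * Real.exp (-(2 * Real.pi * n * y)) : ℝ) : ℂ))
    (hfeC : ∀ t : ℝ, 0 < t → f (↑x0 + Complex.I * ((1/(b^2*t) : ℝ) : ℂ))
        = ((σ * (b*t)^k : ℝ) : ℂ) * f (↑x0 + Complex.I * ↑t))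
    (hr0 : r 0 = 0) :
    ∃ y : ℝ, 0 < y ∧ deriv f (↑x0 + Complex.I * ↑y) = 0 := by
  have pi_pos := Real.pi_pos
  set U : ℝ → ℝ := fun y => (f (↑x0 + Complex.I * ↑y)).re with hU
  set V : ℝ → ℝ := fun y => (Complex.I * deriv f (↑x0 + Complex.I * ↑y)).re with hV
  have hSum : ∀ y : ℝ, 0 < y →
      HasSum (fun n : ℕ => r n * Real.exp (-(2 * Real.pi * n * y))) (U y) :=
    fun y hy => (line_hasSum f c hq x0 r hexp y hy).1
  have him : ∀ y : ℝ, 0 < y → (f (↑x0 + Complex.I * ↑y)).im = 0 :=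
    fun y hy => (line_hasSum f c hq x0 r hexp y hy).2
  have hder : ∀ y : ℝ, 0 < y → HasDerivAt U (V y) y :=
    fun y hy => line_hasDerivAt_re f hf x0 y hy
  have hVc : ContinuousOn V (Set.Ioi 0) := line_contV f hf x0
  have hfeU : ∀ t : ℝ, 0 < t → U (1/(b^2*t)) = σ * (b*t)^k * U t := by
    intro t ht
    simp only [hU]
    rw [hfeC t ht, Complex.re_ofReal_mul]
  by_contra hcon
  push_neg at hcon
  have hV0 : ∀ y : ℝ, 0 < y → V y ≠ 0 := by
    intro y hy hz
    exact hcon y hy (line_deriv_zero f hf x0 him y hy hz)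
  have htop : Tendsto U atTop (𝓝 0) := by
    have := qasymp r U hSum 0
    rw [hr0] at this
    simpa using this
  have hB : Tendsto (fun y : ℝ => U y * Real.exp (2 * Real.pi * y)) atTop (𝓝 (r 1)) := by
    have := qasymp r U hSum 1
    simp only [Finset.sum_range_one, Nat.cast_zero, mul_zero, zero_mul, neg_zero,
      Real.exp_zero, mul_one, hr0, sub_zero, Nat.cast_one] at this
    simpa using this
  have hA : Tendsto (fun t : ℝ => (2*Real.pi*t)^k * Real.exp (-(2*Real.pi*t))) atTop (𝓝 0) :=
    (Real.tendsto_pow_mul_exp_neg_atTop_nhds_zero k).comp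
      (Tendsto.const_mul_atTop (by positivity) tendsto_id)
  have h0 : Tendsto (fun t : ℝ => U (1/(b^2*t))) atTop (𝓝 0) := by
    have hprod : Tendsto (fun t : ℝ =>
        (σ * (b/(2*Real.pi))^k) * (((2*Real.pi*t)^k * Real.exp (-(2*Real.pi*t)))
          * (U t * Real.exp (2 * Real.pi * t)))) atTop (𝓝 ((σ * (b/(2*Real.pi))^k) * (0 * r 1))) :=
      (hA.mul hB).const_mul _
    rw [mul_comm, zero_mul, mul_zero] at hprod
    apply hprod.congr' _
    filter_upwards [eventually_gt_atTop (0:ℝ)] with t ht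
    rw [hfeU t ht]
    have hexpc : Real.exp (-(2*Real.pi*t)) * Real.exp (2 * Real.pi * t) = 1 := by
      rw [← Real.exp_add]; norm_num
    have hbb : (b*t)^k = (b/(2*Real.pi))^k * (2*Real.pi*t)^k := by
      rw [← mul_pow]
      congr 1
      field_simp
    linear_combination (σ * (b/(2*Real.pi))^k * (2*Real.pi*t)^k * U t) * hexpc
      - (σ * U t) * hbb
  exact critical_cusp U V (fun t => 1/(b^2*t)) hder hVc hV0 htop (line_small b hb) h0

private lemma line_noncusp (k : ℕ) (f : ℂ → ℂ) (c : ℕ → ℝ)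
    (hf : DifferentiableOn ℂ f UHP)
    (hq : HasQExp f (fun n => ((c n : ℝ) : ℂ))) (x0 : ℝ) (r : ℕ → ℝ) (σ b : ℝ)
    (hb : 0 < b) (hσ : σ = 1 ∨ σ = -1)
    (hexp : ∀ (n : ℕ) (y : ℝ), 0 < y →
      ((c n : ℝ) : ℂ) * Complex.exp (twoPiI * n * (↑x0 + Complex.I * ↑y))
        = ((r n * Real.exp (-(2 * Real.pi * n * y)) : ℝ) : ℂ))
    (hfeC : ∀ t : ℝ, 0 < t → f (↑x0 + Complex.I * ((1/(b^2*t) : ℝ) : ℂ))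
        = ((σ * (b*t)^k : ℝ) : ℂ) * f (↑x0 + Complex.I * ↑t))
    (n₀ : ℕ) (hn₀ : 1 ≤ n₀) (hk : 1 ≤ k)
    (hr0 : r 0 ≠ 0) (hrn : r n₀ ≠ 0)
    (hgap : ∀ i : ℕ, 1 ≤ i → i < n₀ → r i = 0)
    (hsign : σ * Real.sign (r 0 * r n₀) = -1) :
    ∃ y : ℝ, 0 < y ∧ deriv f (↑x0 + Complex.I * ↑y) = 0 := by
  have pi_pos := Real.pi_pos
  set U : ℝ → ℝ := fun y => (f (↑x0 + Complex.I * ↑y)).re with hU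
  set V : ℝ → ℝ := fun y => (Complex.I * deriv f (↑x0 + Complex.I * ↑y)).re with hV
  have hSum : ∀ y : ℝ, 0 < y →
      HasSum (fun n : ℕ => r n * Real.exp (-(2 * Real.pi * n * y))) (U y) :=
    fun y hy => (line_hasSum f c hq x0 r hexp y hy).1
  have him : ∀ y : ℝ, 0 < y → (f (↑x0 + Complex.I * ↑y)).im = 0 :=
    fun y hy => (line_hasSum f c hq x0 r hexp y hy).2
  have hder : ∀ y : ℝ, 0 < y → HasDerivAt U (V y) y :=
    fun y hy => line_hasDerivAt_re f hf x0 y hy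
  have hVc : ContinuousOn V (Set.Ioi 0) := line_contV f hf x0
  have hfeU : ∀ t : ℝ, 0 < t → U (1/(b^2*t)) = σ * (b*t)^k * U t := by
    intro t ht
    simp only [hU]
    rw [hfeC t ht, Complex.re_ofReal_mul]
  by_contra hcon
  push_neg at hcon
  have hV0 : ∀ y : ℝ, 0 < y → V y ≠ 0 := by
    intro y hy hz
    exact hcon y hy (line_deriv_zero f hf x0 him y hy hz)
  have htop : Tendsto U atTop (𝓝 (r 0)) := by
    have := qasymp r U hSum 0
    simpa using this
  have hasym : Tendsto (fun y : ℝ => (U y - r 0) * Real.exp (2 * Real.pi * n₀ * y))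
      atTop (𝓝 (r n₀)) := by
    have h := qasymp r U hSum n₀
    apply h.congr
    intro y
    congr 2
    rw [Finset.sum_eq_single_of_mem 0 (Finset.mem_range.2 hn₀)]
    · simp
    · intro i hi hne
      rw [hgap i (Nat.one_le_iff_ne_zero.2 hne) (Finset.mem_range.1 hi)]
      ring
  exact critical_noncusp U V (r 0) (r n₀) σ b k n₀ hk hb hder hVc hV0 htop hasym
    hr0 hrn hσ hsign hfeU


private lemma fixpt_line0 (f : ℂ → ℂ) (hf : DifferentiableOn ℂ f UHP)
    (hw : IsWeaklyModular 0 f) : deriv f (↑(0:ℝ) + Complex.I * ↑(1:ℝ)) = 0 := by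
  have hz0eq : (↑(0:ℝ) + Complex.I * ↑(1:ℝ) : ℂ) = Complex.I := by push_cast; ring
  rw [hz0eq]
  have hzI : Complex.I ∈ UHP := by simp [UHP]
  have hdf : DifferentiableAt ℂ f Complex.I := hf.differentiableAt (isOpen_UHP.mem_nhds hzI)
  have hphi : HasDerivAt (fun z : ℂ => -z⁻¹) (-1 : ℂ) Complex.I := by
    have h := (hasDerivAt_inv Complex.I_ne_zero).neg
    have hv : -(-(Complex.I ^ 2)⁻¹) = (-1 : ℂ) := by rw [Complex.I_sq]; norm_num
    rw [hv] at h
    exact h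
  have hfI : HasDerivAt f (deriv f Complex.I) (-(Complex.I)⁻¹) := by
    rw [show -(Complex.I)⁻¹ = Complex.I by simp [Complex.inv_I]]
    exact hdf.hasDerivAt
  have hcomp : HasDerivAt (fun z : ℂ => f (-z⁻¹)) (deriv f Complex.I * (-1)) Complex.I :=
    HasDerivAt.comp Complex.I hfI hphi
  have heq : (fun z : ℂ => f (-z⁻¹)) =ᶠ[𝓝 Complex.I] f := by
    filter_upwards [isOpen_UHP.mem_nhds hzI] with z hz
    have hz0 : z ≠ 0 := by
      intro h0
      rw [h0] at hz
      simp [UHP] at hz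
    have h := hw 0 (-1) 1 0 (by norm_num) z hz
    have harg : (((0:ℤ) : ℂ) * z + ((-1:ℤ) : ℂ)) / (((1:ℤ) : ℂ) * z + ((0:ℤ) : ℂ)) = -z⁻¹ := by
      push_cast
      rw [zero_mul, zero_add, one_mul, add_zero, div_eq_mul_inv, neg_one_mul]
    rw [harg] at h
    rw [h]
    simp
  have hcomp' : HasDerivAt f (deriv f Complex.I * (-1)) Complex.I :=
    hcomp.congr_of_eventuallyEq heq.symm
  have huniq := hcomp'.unique hdf.hasDerivAt
  linear_combination (-(1:ℂ)/2) * huniq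

private lemma fixpt_linehalf (f : ℂ → ℂ) (hf : DifferentiableOn ℂ f UHP)
    (hw : IsWeaklyModular 0 f) : deriv f (↑(1/2:ℝ) + Complex.I * ↑(1/2:ℝ)) = 0 := by
  set z0 : ℂ := ↑(1/2:ℝ) + Complex.I * ↑(1/2:ℝ) with hz0def
  have hz0 : z0 ∈ UHP := by
    simp [UHP, hz0def, Complex.add_im]
  have hdf : DifferentiableAt ℂ f z0 := hf.differentiableAt (isOpen_UHP.mem_nhds hz0)
  have hden : 2 * z0 - 1 = Complex.I := by
    rw [hz0def]
    push_cast
    ring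
  have hdne : 2 * z0 - 1 ≠ 0 := by
    rw [hden]; exact Complex.I_ne_zero
  have hpsi : HasDerivAt (fun z : ℂ => (z - 1)/(2*z - 1)) (-1 : ℂ) z0 := by
    have h1 : HasDerivAt (fun z : ℂ => z - 1) 1 z0 := (hasDerivAt_id z0).sub_const 1
    have h2 : HasDerivAt (fun z : ℂ => 2*z - 1) 2 z0 := by
      simpa using ((hasDerivAt_id z0).const_mul (2:ℂ)).sub_const 1
    have h := h1.div h2 hdne
    have hv : (1 * (2*z0 - 1) - (z0 - 1) * 2) / (2*z0 - 1)^2 = (-1 : ℂ) := by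
      rw [hden, Complex.I_sq]
      rw [hz0def]
      push_cast
      ring_nf
    rw [hv] at h
    exact h
  have hpsiz0 : (z0 - 1)/(2*z0 - 1) = z0 := by
    rw [hden, div_eq_iff Complex.I_ne_zero, hz0def]
    push_cast
    ring_nf
    rw [Complex.I_sq]
    ring
  have hfz0 : HasDerivAt f (deriv f z0) ((z0 - 1)/(2*z0 - 1)) := by
    rw [hpsiz0]; exact hdf.hasDerivAt
  have hcomp : HasDerivAt (fun z : ℂ => f ((z - 1)/(2*z - 1))) (deriv f z0 * (-1)) z0 :=
    HasDerivAt.comp z0 hfz0 hpsi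
  have heq : (fun z : ℂ => f ((z - 1)/(2*z - 1))) =ᶠ[𝓝 z0] f := by
    filter_upwards [isOpen_UHP.mem_nhds hz0] with z hz
    have h := hw 1 (-1) 2 (-1) (by norm_num) z hz
    have hnum : ((1:ℤ) : ℂ) * z + ((-1:ℤ) : ℂ) = z - 1 := by push_cast; ring
    have hden2 : ((2:ℤ) : ℂ) * z + ((-1:ℤ) : ℂ) = 2*z - 1 := by push_cast; ring
    rw [hnum, hden2] at h
    rw [h]
    simp
  have hcomp' : HasDerivAt f (deriv f z0 * (-1)) z0 :=
    hcomp.congr_of_eventuallyEq heq.symm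
  have huniq := hcomp'.unique hdf.hasDerivAt
  linear_combination (-(1:ℂ)/2) * huniq

private lemma feC_line0 (k : ℕ) (f : ℂ → ℂ) (hw : IsWeaklyModular k f) (σ : ℝ)
    (hσ : Complex.I ^ k = ((σ : ℝ) : ℂ)) :
    ∀ t : ℝ, 0 < t → f (↑(0:ℝ) + Complex.I * ((1/((1:ℝ)^2*t) : ℝ) : ℂ))
      = ((σ * ((1:ℝ)*t)^k : ℝ) : ℂ) * f (↑(0:ℝ) + Complex.I * ↑t) := by
  intro t ht
  have ha : (1/((1:ℝ)^2*t) : ℝ) = 1/t := by norm_num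
  rw [ha]
  rw [fe_line0 k f hw t ht, hσ]
  push_cast
  ring

private lemma feC_linehalf (k : ℕ) (f : ℂ → ℂ) (hw : IsWeaklyModular k f) (σ : ℝ)
    (hσ : Complex.I ^ k = ((σ : ℝ) : ℂ)) :
    ∀ t : ℝ, 0 < t → f (↑(1/2:ℝ) + Complex.I * ((1/((2:ℝ)^2*t) : ℝ) : ℂ))
      = ((σ * ((2:ℝ)*t)^k : ℝ) : ℂ) * f (↑(1/2:ℝ) + Complex.I * ↑t) := by
  intro t ht
  have ha : (1/((2:ℝ)^2*t) : ℝ) = 1/(4*t) := by norm_num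
  rw [ha]
  rw [fe_linehalf k f hw t ht, hσ]
  push_cast
  ring

private lemma I_pow_mod4_0' {k : ℕ} (h : k % 4 = 0) : Complex.I ^ k = (((1:ℝ)) : ℂ) := by
  obtain ⟨m, hm⟩ : 4 ∣ k := Nat.dvd_of_mod_eq_zero h
  rw [hm, pow_mul, Complex.I_pow_four, one_pow]
  norm_num

private lemma I_pow_mod4_2' {k : ℕ} (h : k % 4 = 2) : Complex.I ^ k = (((-1:ℝ)) : ℂ) := by
  have hk : k = 4 * (k / 4) + 2 := by omega
  rw [hk, pow_add, pow_mul, Complex.I_pow_four, one_pow, Complex.I_sq, one_mul]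
  norm_num

private lemma sign_flip {e X : ℝ} (he : e = 1 ∨ e = -1) (hX : X ≠ 0) :
    Real.sign (e * X) = e * Real.sign X := by
  rcases he with h | h <;> subst h
  · rw [one_mul, one_mul]
  · rcases hX.lt_or_gt with h | h
    · rw [Real.sign_of_neg h, Real.sign_of_pos (by linarith : (0:ℝ) < -1*X)]
      ring
    · rw [Real.sign_of_pos h, Real.sign_of_neg (by linarith : (-1:ℝ)*X < 0)]
      ring

/-- Critical points of modular forms on the lines `Re z = 1/2` and
`Re z = 0`. Here, for a non-cuspidal nonconstant `f` with first two nonzero real Fourier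
coefficients `c 0` and `c n₀`, one has `ε'_f = sign(c 0 · c n₀)` and
`ε_f = (-1)^{n₀} ε'_f`. -/
theorem stmt12 (k : ℕ) (hke : Even k) (f : ℂ → ℂ) (c : ℕ → ℝ)
    (hf : IsModularForm k f (fun n => ((c n : ℝ) : ℂ))) (hne : ∃ n, c n ≠ 0) :
    -- case (i): `f` cuspidal, `k ≡ 0 (mod 4)`
    ((c 0 = 0 ∧ k % 4 = 0) →
      (∃ y : ℝ, 0 < y ∧ deriv f ((1/2 : ℂ) + Complex.I * y) = 0) ∧
      (∃ y : ℝ, 0 < y ∧ deriv f (Complex.I * y) = 0)) ∧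
    -- non-cuspidal, nonconstant cases
    (∀ n₀ : ℕ, 1 ≤ n₀ → c 0 ≠ 0 → c n₀ ≠ 0 → (∀ i, 1 ≤ i → i < n₀ → c i = 0) →
      -- case (ii): `ε_f = -1`, `k ≡ 0 (mod 4)`
      (((-1 : ℝ) ^ n₀ * Real.sign (c 0 * c n₀) = -1 ∧ k % 4 = 0 →
        ∃ y : ℝ, 0 < y ∧ deriv f ((1/2 : ℂ) + Complex.I * y) = 0) ∧
      -- case (iii): `ε_f = 1`, `k ≡ 2 (mod 4)`
      ((-1 : ℝ) ^ n₀ * Real.sign (c 0 * c n₀) = 1 ∧ k % 4 = 2 →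
        ∃ y : ℝ, 0 < y ∧ deriv f ((1/2 : ℂ) + Complex.I * y) = 0) ∧
      -- case (iv): `ε'_f = -1`, `k ≡ 0 (mod 4)`
      (Real.sign (c 0 * c n₀) = -1 ∧ k % 4 = 0 →
        ∃ y : ℝ, 0 < y ∧ deriv f (Complex.I * y) = 0) ∧
      -- case (v): `ε'_f = 1`, `k ≡ 2 (mod 4)`
      (Real.sign (c 0 * c n₀) = 1 ∧ k % 4 = 2 →
        ∃ y : ℝ, 0 < y ∧ deriv f (Complex.I * y) = 0))) := by
  
  obtain ⟨hdiff, hw, hq⟩ := hf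
  constructor
  · rintro ⟨hc0, hk4⟩
    constructor
    · -- cuspidal, line Re = 1/2
      obtain ⟨y, hy, hd⟩ := line_cusp k f c hdiff hq (1/2) (fun n => (-1)^n * c n) 1 2
        (by norm_num)
        (fun n y hy => exp_linehalf (c n) n y hy)
        (by simpa using feC_linehalf k f hw 1 (I_pow_mod4_0' hk4))
        (by simp [hc0])
      exact ⟨y, hy, by rwa [show ((1/2:ℝ):ℂ) = (1/2:ℂ) by norm_num] at hd⟩
    · -- cuspidal, line Re = 0
      obtain ⟨y, hy, hd⟩ := line_cusp k f c hdiff hq 0 c 1 1 one_pos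
        (fun n y hy => exp_line0 (c n) n y hy)
        (by simpa using feC_line0 k f hw 1 (I_pow_mod4_0' hk4))
        hc0
      exact ⟨y, hy, by rwa [show ((0:ℝ):ℂ) = 0 by norm_num, zero_add] at hd⟩
  · intro n₀ hn₀ hc0 hcn hgapc
    have hX : c 0 * c n₀ ≠ 0 := mul_ne_zero hc0 hcn
    have he : ((-1:ℝ))^n₀ = 1 ∨ ((-1:ℝ))^n₀ = -1 := by
      rcases Nat.even_or_odd n₀ with h | h
      · exact Or.inl h.neg_one_pow
      · exact Or.inr h.neg_one_pow
    have hrprod : ((-1:ℝ))^0 * c 0 * (((-1:ℝ))^n₀ * c n₀) = ((-1:ℝ))^n₀ * (c 0 * c n₀) := by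
      ring
    refine ⟨?_, ?_, ?_, ?_⟩
    · -- case (ii) : ε = -1, k ≡ 0 (mod 4), line Re = 1/2
      rintro ⟨hs, hk4⟩
      rcases Nat.eq_zero_or_pos k with hk0 | hk1
      · have hw0 : IsWeaklyModular 0 f := by rw [hk0] at hw; simpa using hw
        refine ⟨1/2, by norm_num, ?_⟩
        have h12 : ((1/2:ℝ):ℂ) = (1/2:ℂ) := by norm_num
        rw [← h12]
        exact fixpt_linehalf f hdiff hw0
      · have hsign : (1:ℝ) * Real.sign ((fun n => ((-1:ℝ))^n * c n) 0 *
            (fun n => ((-1:ℝ))^n * c n) n₀) = -1 := by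
          simp only [one_mul]
          rw [show ((-1:ℝ))^0 * c 0 * (((-1:ℝ))^n₀ * c n₀)
              = ((-1:ℝ))^n₀ * (c 0 * c n₀) from hrprod, sign_flip he hX]
          exact hs
        obtain ⟨y, hy, hd⟩ := line_noncusp k f c hdiff hq (1/2) (fun n => (-1)^n * c n) 1 2
          (by norm_num) (Or.inl rfl)
          (fun n y hy => exp_linehalf (c n) n y hy)
          (by simpa using feC_linehalf k f hw 1 (I_pow_mod4_0' hk4))
          n₀ hn₀ hk1
          (by simpa using hc0)
          (by simpa using mul_ne_zero (pow_ne_zero n₀ (by norm_num : (-1:ℝ) ≠ 0)) hcn)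
          (fun i hi1 hi2 => by simp [hgapc i hi1 hi2])
          hsign
        exact ⟨y, hy, by rwa [show ((1/2:ℝ):ℂ) = (1/2:ℂ) by norm_num] at hd⟩
    · -- case (iii) : ε = 1, k ≡ 2 (mod 4), line Re = 1/2
      rintro ⟨hs, hk4⟩
      have hk1 : 1 ≤ k := by omega
      have hsign : (-1:ℝ) * Real.sign ((fun n => ((-1:ℝ))^n * c n) 0 *
          (fun n => ((-1:ℝ))^n * c n) n₀) = -1 := by
        simp only
        rw [show ((-1:ℝ))^0 * c 0 * (((-1:ℝ))^n₀ * c n₀)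
            = ((-1:ℝ))^n₀ * (c 0 * c n₀) from hrprod, sign_flip he hX, hs]
        norm_num
      obtain ⟨y, hy, hd⟩ := line_noncusp k f c hdiff hq (1/2) (fun n => (-1)^n * c n) (-1) 2
        (by norm_num) (Or.inr rfl)
        (fun n y hy => exp_linehalf (c n) n y hy)
        (by simpa using feC_linehalf k f hw (-1) (I_pow_mod4_2' hk4))
        n₀ hn₀ hk1
        (by simpa using hc0)
        (by simpa using mul_ne_zero (pow_ne_zero n₀ (by norm_num : (-1:ℝ) ≠ 0)) hcn)
        (fun i hi1 hi2 => by simp [hgapc i hi1 hi2])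
        hsign
      exact ⟨y, hy, by rwa [show ((1/2:ℝ):ℂ) = (1/2:ℂ) by norm_num] at hd⟩
    · -- case (iv) : ε' = -1, k ≡ 0 (mod 4), line Re = 0
      rintro ⟨hs, hk4⟩
      rcases Nat.eq_zero_or_pos k with hk0 | hk1
      · have hw0 : IsWeaklyModular 0 f := by rw [hk0] at hw; simpa using hw
        refine ⟨1, by norm_num, ?_⟩
        have := fixpt_line0 f hdiff hw0
        rwa [show ((0:ℝ):ℂ) = 0 from by norm_num, zero_add, show ((1:ℝ):ℂ) = 1 from by norm_num] at this
      · have hsign : (1:ℝ) * Real.sign (c 0 * c n₀) = -1 := by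
          rw [one_mul]; exact hs
        obtain ⟨y, hy, hd⟩ := line_noncusp k f c hdiff hq 0 c 1 1 one_pos (Or.inl rfl)
          (fun n y hy => exp_line0 (c n) n y hy)
          (by simpa using feC_line0 k f hw 1 (I_pow_mod4_0' hk4))
          n₀ hn₀ hk1 hc0 hcn hgapc hsign
        exact ⟨y, hy, by rwa [show ((0:ℝ):ℂ) = 0 by norm_num, zero_add] at hd⟩
    · -- case (v) : ε' = 1, k ≡ 2 (mod 4), line Re = 0
      rintro ⟨hs, hk4⟩
      have hk1 : 1 ≤ k := by omega
      have hsign : (-1:ℝ) * Real.sign (c 0 * c n₀) = -1 := by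
        rw [hs]; norm_num
      obtain ⟨y, hy, hd⟩ := line_noncusp k f c hdiff hq 0 c (-1) 1 one_pos (Or.inr rfl)
        (fun n y hy => exp_line0 (c n) n y hy)
        (by simpa using feC_line0 k f hw (-1) (I_pow_mod4_2' hk4))
        n₀ hn₀ hk1 hc0 hcn hgapc hsign
      exact ⟨y, hy, by rwa [show ((0:ℝ):ℂ) = 0 by norm_num, zero_add] at hd⟩
end

section
/- Let f be a non-cuspidal, nonconstant modular form of weight k for PSL₂(ℤ) with real Fourier coefficients. Define r₀(y) = Df(iy)/[(i/y)^{k+2}·Df(i/y)] and r₁(y) = Df(1/2+iy)/[(i/(2y))^{k+2}·Df(1/2 + i/(4y))], which are real for all sufficiently small y > 0. Then as y → 0⁺, ε'_f·(1 − r₀(y)) → +∞ and ε_f·(1 − r₁(y)) → +∞; that is, r₀(y) = 1 − ε'_f·ω(1) and r₁(y) = 1 − ε_f·ω(1) as y → 0⁺. -/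
open Filter Topology
open scoped Classical

noncomputable section StatementFifteenAux

open Filter Topology

namespace Stmt15

theorem twoPiI_ne : twoPiI ≠ 0 := by
  simp [twoPiI, Real.pi_ne_zero, Complex.I_ne_zero]

theorem UHP_open : IsOpen UHP := isOpen_lt continuous_const Complex.continuous_im

theorem exp_twoPiI_real (x : ℝ) (n : ℕ) :
    Complex.exp (twoPiI * n * ((x : ℂ) * Complex.I)) = ((Real.exp (-(2 * Real.pi * x)) ^ n : ℝ) : ℂ) := by
  have h1 : twoPiI * n * ((x : ℂ) * Complex.I) = ((n * (-(2 * Real.pi * x)) : ℝ) : ℂ) := by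
    push_cast [twoPiI]
    ring_nf
    rw [Complex.I_sq]
    ring
  rw [h1, ← Complex.ofReal_exp, Real.exp_nat_mul]

theorem coef_bdd (c : ℕ → ℝ)
    (hs : ∀ z ∈ UHP, Summable fun n : ℕ => (c n : ℂ) * Complex.exp (twoPiI * n * z))
    (s : ℝ) (hs0 : 0 < s) (hs1 : s < 1) : ∃ C : ℝ, ∀ n, |c n| * s ^ n ≤ C := by
  have hlog : Real.log s < 0 := Real.log_neg hs0 hs1
  set t : ℝ := -(Real.log s) / (2 * Real.pi) with ht
  have ht0 : 0 < t := by
    apply div_pos (by linarith) (by positivity)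
  set z : ℂ := (t : ℂ) * Complex.I with hz
  have hzU : z ∈ UHP := by
    simp only [UHP, Set.mem_setOf_eq, hz]
    simpa using ht0
  have hst : Real.exp (-(2 * Real.pi * t)) = s := by
    rw [ht]
    rw [show -(2*Real.pi*(-(Real.log s)/(2*Real.pi))) = Real.log s by
      field_simp]
    exact Real.exp_log hs0
  have h2 := hs z hzU
  have h3 : Summable fun n : ℕ => c n * s ^ n := by
    rw [← Complex.summable_ofReal]
    convert h2 using 2 with n
    rw [hz, exp_twoPiI_real, hst]
    push_cast; ring
  have h4 : Tendsto (fun n => c n * s ^ n) atTop (𝓝 0) := h3.tendsto_atTop_zero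
  obtain ⟨C, hC⟩ := h4.norm.bddAbove_range
  exact ⟨C, fun n => hC ⟨n, by simp [abs_mul, abs_of_pos hs0]⟩⟩

theorem summable1 (c : ℕ → ℝ)
    (hb : ∀ s : ℝ, 0 < s → s < 1 → ∃ C : ℝ, ∀ n, |c n| * s ^ n ≤ C)
    (r : ℝ) (hr0 : 0 ≤ r) (hr1 : r < 1) : Summable fun n : ℕ => |c n| * r ^ n := by
  set s := (1 + r) / 2 with hsdef
  have hs0 : 0 < s := by rw [hsdef]; linarith
  have hs1 : s < 1 := by rw [hsdef]; linarith
  have hrs : r < s := by rw [hsdef]; linarith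
  obtain ⟨C, hC⟩ := hb s hs0 hs1
  have hC0 : 0 ≤ C := le_trans (by positivity) (hC 0)
  have hg : Summable fun n : ℕ => C * (r / s) ^ n :=
    (summable_geometric_of_lt_one (by positivity)
      (by rw [div_lt_one hs0]; exact hrs)).mul_left C
  refine hg.of_nonneg_of_le (fun n => by positivity) (fun n => ?_)
  have h1 : |c n| * r ^ n = (|c n| * s ^ n) * (r / s) ^ n := by
    have hsn : s ^ n ≠ 0 := pow_ne_zero _ hs0.ne'
    rw [div_pow r s n, show (|c n| * s ^ n) * (r ^ n / s ^ n) = |c n| * r ^ n * (s ^ n / s ^ n) by ring, div_self hsn, mul_one]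
  rw [h1]
  exact mul_le_mul_of_nonneg_right (hC n) (by positivity)

theorem summable2 (c : ℕ → ℝ)
    (hb : ∀ s : ℝ, 0 < s → s < 1 → ∃ C : ℝ, ∀ n, |c n| * s ^ n ≤ C)
    (r : ℝ) (hr0 : 0 ≤ r) (hr1 : r < 1) :
    Summable fun n : ℕ => (n : ℝ) * (|c n| * r ^ n) := by
  set s := (1 + r) / 2 with hsdef
  have hs0 : 0 < s := by rw [hsdef]; linarith
  have hs1 : s < 1 := by rw [hsdef]; linarith
  have hrs : r < s := by rw [hsdef]; linarith
  obtain ⟨C, hC⟩ := hb s hs0 hs1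
  have hC0 : 0 ≤ C := le_trans (by positivity) (hC 0)
  have hg : Summable fun n : ℕ => C * ((n : ℝ) * (r / s) ^ n) := by
    apply Summable.mul_left
    have := summable_pow_mul_geometric_of_norm_lt_one (R := ℝ) 1 (r := r/s)
      (by rw [Real.norm_eq_abs, abs_of_nonneg (by positivity), div_lt_one hs0]; exact hrs)
    simpa using this
  refine hg.of_nonneg_of_le (fun n => by positivity) (fun n => ?_)
  have h1 : (n:ℝ) * (|c n| * r ^ n) = (|c n| * s ^ n) * ((n:ℝ) * (r / s) ^ n) := by
    have hsn : s ^ n ≠ 0 := pow_ne_zero _ hs0.ne'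
    rw [div_pow r s n, show (|c n| * s ^ n) * ((n:ℝ) * (r ^ n / s ^ n)) = (n:ℝ) * (|c n| * r ^ n) * (s ^ n / s ^ n) by ring, div_self hsn, mul_one]
  rw [h1]
  exact mul_le_mul_of_nonneg_right (hC n) (by positivity)

theorem exp_pow (z : ℂ) (n : ℕ) :
    Complex.exp (twoPiI * n * z) = Complex.exp (twoPiI * z) ^ n := by
  rw [← Complex.exp_nat_mul]; ring_nf

theorem norm_q (z : ℂ) : ‖Complex.exp (twoPiI * z)‖ = Real.exp (-(2 * Real.pi * z.im)) := by
  rw [Complex.norm_exp]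
  congr 1
  simp [twoPiI, Complex.mul_re, Complex.mul_im]

theorem norm_q_lt_one {z : ℂ} (hz : z ∈ UHP) : ‖Complex.exp (twoPiI * z)‖ < 1 := by
  rw [norm_q, Real.exp_lt_one_iff]
  have : 0 < z.im := hz
  have := Real.pi_pos
  nlinarith

theorem value_lemma (c : ℕ → ℝ) (f : ℂ → ℂ) (hQ : HasQExp f fun n => (c n : ℂ))
    (hsum : ∀ r : ℝ, 0 ≤ r → r < 1 → Summable fun n : ℕ => |c n| * r ^ n)
    (z : ℂ) (hz : z ∈ UHP) (q : ℝ) (hq : Complex.exp (twoPiI * z) = (q : ℂ)) :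
    f z = ((∑' n : ℕ, c n * q ^ n : ℝ) : ℂ) := by
  have hq1 : |q| < 1 := by
    have := norm_q_lt_one hz
    rwa [hq, Complex.norm_real, Real.norm_eq_abs] at this
  have hsq : Summable fun n : ℕ => c n * q ^ n := by
    apply Summable.of_abs
    refine (hsum |q| (abs_nonneg q) hq1).of_nonneg_of_le (fun n => abs_nonneg _) (fun n => ?_)
    rw [abs_mul, abs_pow]
  have h1 := hQ z hz
  simp_rw [exp_pow, hq] at h1
  have h2 : HasSum (fun n : ℕ => ((c n * q ^ n : ℝ) : ℂ)) ((∑' n : ℕ, c n * q ^ n : ℝ) : ℂ) := by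
    rw [Complex.hasSum_ofReal]
    exact hsq.hasSum
  refine h1.unique ?_
  convert h2 using 2 with n
  push_cast; ring

theorem deriv_lemma (c : ℕ → ℝ) (f : ℂ → ℂ) (hQ : HasQExp f fun n => (c n : ℂ))
    (hsum2 : ∀ r : ℝ, 0 ≤ r → r < 1 → Summable fun n : ℕ => (n : ℝ) * (|c n| * r ^ n))
    (z : ℂ) (hz : z ∈ UHP) :
    HasDerivAt f (twoPiI * ∑' n : ℕ, (n : ℂ) * ((c n : ℂ) * Complex.exp (twoPiI * n * z))) z := by
  have hzim : 0 < z.im := hz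
  set b : ℝ := z.im / 2 with hb
  have hb0 : 0 < b := by positivity
  set t : Set ℂ := {w : ℂ | b < w.im} with htdef
  have hto : IsOpen t := isOpen_lt continuous_const Complex.continuous_im
  have htc : Convex ℝ t := convex_halfSpace_im_gt b
  have hzt : z ∈ t := by simp only [htdef, Set.mem_setOf_eq]; linarith
  have htU : t ⊆ UHP := fun w hw => lt_trans hb0 hw
  set r : ℝ := Real.exp (-(2 * Real.pi * b)) with hr
  have hr0 : 0 < r := Real.exp_pos _
  have hr1 : r < 1 := by
    rw [hr, Real.exp_lt_one_iff]
    have := Real.pi_pos; nlinarith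
  set u : ℕ → ℝ := fun n => (2 * Real.pi) * ((n : ℝ) * (|c n| * r ^ n)) with hu
  have hus : Summable u := (hsum2 r hr0.le hr1).mul_left _
  set g : ℕ → ℂ → ℂ := fun n w => (c n : ℂ) * Complex.exp (twoPiI * n * w) with hg
  set g' : ℕ → ℂ → ℂ := fun n w => twoPiI * n * ((c n : ℂ) * Complex.exp (twoPiI * n * w)) with hg'
  have hder : ∀ n : ℕ, ∀ w ∈ t, HasDerivAt (g n) (g' n w) w := by
    intro n w _
    have h1 : HasDerivAt (fun w : ℂ => twoPiI * n * w) (twoPiI * n) w := by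
      simpa using (hasDerivAt_id w).const_mul (twoPiI * (n:ℂ))
    have h2 := h1.cexp
    have := h2.const_mul ((c n : ℂ))
    refine this.congr_deriv ?_
    show _ = twoPiI * n * ((c n : ℂ) * Complex.exp (twoPiI * n * w))
    ring
  have hbound : ∀ n : ℕ, ∀ w ∈ t, ‖g' n w‖ ≤ u n := by
    intro n w hw
    have hw' : b < w.im := hw
    simp only [hg', hu]
    rw [norm_mul, norm_mul, norm_mul]
    have h1 : ‖twoPiI‖ = 2 * Real.pi := by
      simp [twoPiI, Complex.norm_real, abs_of_pos Real.pi_pos]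
    have h2 : ‖(n : ℂ)‖ = (n : ℝ) := by simp
    have h3 : ‖(c n : ℂ)‖ = |c n| := by simp [Complex.norm_real]
    have h4 : ‖Complex.exp (twoPiI * n * w)‖ ≤ r ^ n := by
      rw [show twoPiI * (n:ℂ) * w = twoPiI * ((n:ℂ) * w) by ring]
      rw [norm_q]
      rw [hr, ← Real.exp_nat_mul]
      apply Real.exp_le_exp.2
      have : ((n:ℂ) * w).im = n * w.im := by simp
      rw [this]
      have := Real.pi_pos
      rcases Nat.eq_zero_or_pos n with h | h
      · simp [h]
      · have h5 : (n:ℝ) * b ≤ (n:ℝ) * w.im :=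
          mul_le_mul_of_nonneg_left hw'.le (Nat.cast_nonneg n)
        nlinarith
    rw [h1, h2, h3]
    calc 2 * Real.pi * (n:ℝ) * (|c n| * ‖Complex.exp (twoPiI * n * w)‖)
        ≤ 2 * Real.pi * (n:ℝ) * (|c n| * r ^ n) := by
          have := mul_le_mul_of_nonneg_left h4 (abs_nonneg (c n))
          apply mul_le_mul_of_nonneg_left this
          positivity
      _ = 2 * Real.pi * ((n:ℝ) * (|c n| * r ^ n)) := by ring
  have hsum0 : Summable fun n => g n z := (hQ z hz).summable
  have hds := hasDerivAt_tsum_of_isPreconnected hus hto htc.isPreconnected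
    hder hbound hzt hsum0 hzt
  have heq : f =ᶠ[𝓝 z] fun w => ∑' n, g n w := by
    filter_upwards [hto.mem_nhds hzt] with w hw
    exact ((hQ w (htU hw)).tsum_eq).symm
  have hfinal := hds.congr_of_eventuallyEq heq
  refine HasDerivAt.congr_deriv hfinal ?_
  have h6 : ∀ n : ℕ, g' n z = twoPiI * ((n:ℂ) * ((c n : ℂ) * Complex.exp (twoPiI * n * z))) := by
    intro n; simp only [hg']; ring
  rw [show (fun n : ℕ => g' n z) = fun n : ℕ => twoPiI * ((n:ℂ) * ((c n : ℂ) * Complex.exp (twoPiI * n * z))) from funext h6] at *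
  rw [tsum_mul_left]

end Stmt15
end StatementFifteenAux
noncomputable section StatementFifteenAux2
open Filter Topology
namespace Stmt15

theorem dop_value (c : ℕ → ℝ) (f : ℂ → ℂ) (hQ : HasQExp f fun n => (c n : ℂ))
    (hsum2 : ∀ r : ℝ, 0 ≤ r → r < 1 → Summable fun n : ℕ => (n : ℝ) * (|c n| * r ^ n))
    (z : ℂ) (hz : z ∈ UHP) (q : ℝ) (hq : Complex.exp (twoPiI * z) = (q : ℂ)) :
    Dop f z = ((∑' n : ℕ, (n : ℝ) * (c n * q ^ n) : ℝ) : ℂ) := by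
  have hq1 : |q| < 1 := by
    have := norm_q_lt_one hz
    rwa [hq, Complex.norm_real, Real.norm_eq_abs] at this
  have hd := deriv_lemma c f hQ hsum2 z hz
  have h1 : Dop f z = ∑' n : ℕ, (n : ℂ) * ((c n : ℂ) * Complex.exp (twoPiI * n * z)) := by
    rw [Dop, hd.deriv, inv_mul_cancel_left₀ twoPiI_ne]
  rw [h1]
  have h2 : (fun n : ℕ => (n : ℂ) * ((c n : ℂ) * Complex.exp (twoPiI * n * z)))
      = fun n : ℕ => (((n : ℝ) * (c n * q ^ n) : ℝ) : ℂ) := by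
    funext n
    rw [exp_pow, hq]
    push_cast; ring
  rw [h2, ← Complex.ofReal_tsum]

theorem transform_S_val (k : ℕ) (f : ℂ → ℂ) (hw : IsWeaklyModular k f)
    (z : ℂ) (hz : z ∈ UHP) (hz0 : z ≠ 0) : f (-z⁻¹) = z ^ k * f z := by
  have h := hw 0 (-1) 1 0 (by ring) z hz
  have harg : (((0:ℤ):ℂ) * z + ((-1:ℤ):ℂ)) / (((1:ℤ):ℂ) * z + ((0:ℤ):ℂ)) = -z⁻¹ := by
    push_cast
    simp only [zero_mul, zero_add, one_mul, add_zero, neg_div, one_div]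
  have hpow : (((1:ℤ):ℂ) * z + ((0:ℤ):ℂ)) ^ ((k:ℕ):ℤ) = z ^ k := by
    push_cast
    rw [one_mul, add_zero, zpow_natCast]
  rw [harg, hpow] at h
  exact h

theorem mem_UHP_neg_inv {z : ℂ} (hz : z ∈ UHP) : -z⁻¹ ∈ UHP := by
  have hzim : 0 < z.im := hz
  have hz0 : z ≠ 0 := by
    intro h; rw [h] at hzim; simp at hzim
  show 0 < (-z⁻¹).im
  rw [Complex.neg_im, Complex.inv_im, neg_div, neg_neg]
  exact div_pos hzim (Complex.normSq_pos.2 hz0)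

theorem ne_zero_of_UHP {z : ℂ} (hz : z ∈ UHP) : z ≠ 0 := by
  have hzim : 0 < z.im := hz
  intro h; rw [h] at hzim; simp at hzim

theorem transform_S_deriv (k : ℕ) (f : ℂ → ℂ) (hw : IsWeaklyModular k f)
    (hder : ∀ z ∈ UHP, DifferentiableAt ℂ f z)
    (z : ℂ) (hz : z ∈ UHP) :
    Dop f (-z⁻¹) = z ^ (k+2) * Dop f z + ((k:ℂ)/twoPiI) * z ^ (k+1) * f z := by
  have hz0 : z ≠ 0 := ne_zero_of_UHP hz
  have hmem : -z⁻¹ ∈ UHP := mem_UHP_neg_inv hz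
  have h1 : HasDerivAt (fun w : ℂ => -w⁻¹) ((z^2)⁻¹) z := by
    simpa using (hasDerivAt_inv hz0).fun_neg
  have h2 : HasDerivAt (fun w => f (-w⁻¹)) (deriv f (-z⁻¹) * (z^2)⁻¹) z :=
    ((hder _ hmem).hasDerivAt).comp z h1
  have h3 : HasDerivAt (fun w : ℂ => w ^ k * f w)
      ((k:ℂ) * z ^ (k-1) * f z + z ^ k * deriv f z) z :=
    (hasDerivAt_pow k z).mul ((hder z hz).hasDerivAt)
  have h4 : HasDerivAt (fun w => f (-w⁻¹))
      ((k:ℂ) * z ^ (k-1) * f z + z ^ k * deriv f z) z := by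
    refine h3.congr_of_eventuallyEq ?_
    filter_upwards [UHP_open.mem_nhds hz] with w hwU
    exact transform_S_val k f hw w hwU (ne_zero_of_UHP hwU)
  have h5 := h4.unique h2
  have hd : deriv f (-z⁻¹) = ((k:ℂ) * z ^ (k-1) * f z + z ^ k * deriv f z) * z^2 := by
    rw [h5]; field_simp
  show (twoPiI)⁻¹ * deriv f (-z⁻¹) = _
  rw [hd]
  rcases k with _ | m
  · push_cast
    simp only [Dop]
    ring
  · have hpow : z ^ (m + 1 - 1) * z ^ 2 = z ^ (m + 1 + 1) := by
      rw [Nat.add_sub_cancel, ← pow_add]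
    rw [Nat.add_sub_cancel]
    simp only [Dop]
    field_simp [twoPiI_ne]
    ring

end Stmt15
end StatementFifteenAux2
noncomputable section StatementFifteenAux3
open Filter Topology
namespace Stmt15

theorem two_z_sub_one_ne {z : ℂ} (hz : z ∈ UHP) : 2 * z - 1 ≠ 0 := by
  have hzim : 0 < z.im := hz
  intro h
  have : (2 * z - 1).im = 2 * z.im := by simp
  rw [h] at this
  simp at this
  linarith

theorem mem_UHP_T1 {z : ℂ} (hz : z ∈ UHP) : (z - 1) / (2 * z - 1) ∈ UHP := by
  have hzim : 0 < z.im := hz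
  have hne := two_z_sub_one_ne hz
  show 0 < ((z - 1) / (2 * z - 1)).im
  rw [Complex.div_im]
  have hns : 0 < Complex.normSq (2 * z - 1) := Complex.normSq_pos.2 hne
  have h1 : (z - 1).im * (2 * z - 1).re - (z - 1).re * (2 * z - 1).im = z.im := by
    simp [Complex.sub_re, Complex.sub_im, Complex.mul_re, Complex.mul_im]
    ring
  have h2 : (z - 1).im * (2 * z - 1).re / Complex.normSq (2 * z - 1) -
      (z - 1).re * (2 * z - 1).im / Complex.normSq (2 * z - 1)
      = z.im / Complex.normSq (2 * z - 1) := by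
    rw [← sub_div, h1]
  rw [h2]
  positivity

theorem transform_T1_val (k : ℕ) (f : ℂ → ℂ) (hw : IsWeaklyModular k f)
    (z : ℂ) (hz : z ∈ UHP) : f ((z - 1) / (2 * z - 1)) = (2 * z - 1) ^ k * f z := by
  have h := hw 1 (-1) 2 (-1) (by ring) z hz
  have harg : (((1:ℤ):ℂ) * z + ((-1:ℤ):ℂ)) / (((2:ℤ):ℂ) * z + ((-1:ℤ):ℂ)) = (z - 1) / (2 * z - 1) := by
    push_cast
    ring_nf
  have hpow : (((2:ℤ):ℂ) * z + ((-1:ℤ):ℂ)) ^ ((k:ℕ):ℤ) = (2 * z - 1) ^ k := by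
    push_cast
    rw [zpow_natCast]
    ring_nf
  rw [harg, hpow] at h
  exact h

theorem transform_T1_deriv (k : ℕ) (f : ℂ → ℂ) (hw : IsWeaklyModular k f)
    (hder : ∀ z ∈ UHP, DifferentiableAt ℂ f z)
    (z : ℂ) (hz : z ∈ UHP) :
    Dop f ((z - 1) / (2 * z - 1)) = (2 * z - 1) ^ (k+2) * Dop f z
      + ((2 * k : ℂ)/twoPiI) * (2 * z - 1) ^ (k+1) * f z := by
  have hne := two_z_sub_one_ne hz
  have hmem := mem_UHP_T1 hz
  have hnum : HasDerivAt (fun w : ℂ => w - 1) 1 z := by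
    simpa using (hasDerivAt_id z).sub_const 1
  have hden : HasDerivAt (fun w : ℂ => 2 * w - 1) 2 z := by
    simpa using ((hasDerivAt_id z).const_mul (2:ℂ)).sub_const 1
  have h1 : HasDerivAt (fun w : ℂ => (w - 1) / (2 * w - 1)) (((2*z-1)^2)⁻¹) z := by
    have := hnum.div hden hne
    refine this.congr_deriv ?_
    rw [inv_eq_one_div]
    congr 1
    ring
  have h2 : HasDerivAt (fun w => f ((w - 1) / (2 * w - 1)))
      (deriv f ((z - 1) / (2 * z - 1)) * ((2*z-1)^2)⁻¹) z :=
    ((hder _ hmem).hasDerivAt).comp z h1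
  have hpow : HasDerivAt (fun w : ℂ => (2 * w - 1) ^ k)
      ((k:ℂ) * (2 * z - 1) ^ (k - 1) * 2) z := hden.pow k
  have h3 : HasDerivAt (fun w : ℂ => (2 * w - 1) ^ k * f w)
      (((k:ℂ) * (2 * z - 1) ^ (k-1) * 2) * f z + (2 * z - 1) ^ k * deriv f z) z :=
    hpow.mul ((hder z hz).hasDerivAt)
  have h4 : HasDerivAt (fun w => f ((w - 1) / (2 * w - 1)))
      (((k:ℂ) * (2 * z - 1) ^ (k-1) * 2) * f z + (2 * z - 1) ^ k * deriv f z) z := by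
    refine h3.congr_of_eventuallyEq ?_
    filter_upwards [UHP_open.mem_nhds hz] with w hwU
    exact transform_T1_val k f hw w hwU
  have h5 := h4.unique h2
  have hd : deriv f ((z - 1) / (2 * z - 1)) =
      (((k:ℂ) * (2 * z - 1) ^ (k-1) * 2) * f z + (2 * z - 1) ^ k * deriv f z) * (2*z-1)^2 := by
    rw [h5, inv_mul_cancel_right₀ (pow_ne_zero 2 hne)]
  show (twoPiI)⁻¹ * deriv f ((z - 1) / (2 * z - 1)) = _
  rw [hd]
  rcases k with _ | m
  · push_cast
    simp only [Dop]
    ring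
  · have hpow' : (2*z-1) ^ (m + 1 - 1) * (2*z-1) ^ 2 = (2*z-1) ^ (m + 1 + 1) := by
      rw [Nat.add_sub_cancel, ← pow_add]
    rw [Nat.add_sub_cancel]
    simp only [Dop]
    field_simp [twoPiI_ne]
    ring

end Stmt15
end StatementFifteenAux3
noncomputable section StatementFifteenAux4
open Filter Topology
namespace Stmt15

def Pser (c : ℕ → ℝ) (v : ℝ) : ℝ := ∑' n : ℕ, c n * v ^ n
def Qser (c : ℕ → ℝ) (v : ℝ) : ℝ := ∑' n : ℕ, (n:ℝ) * (c n * v ^ n)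

theorem key_alg (k : ℕ) (hk : Even k) (A V W w K : ℂ) (hw : w ≠ 0) (hW : W ≠ 0)
    (hEq : W = w^(k+2) * A + (K/twoPiI) * w * V) :
    1 - A / ((-w⁻¹)^(k+2) * W) = (K/twoPiI) * w * V / W := by
  have hev : Even (k+2) := by
    rcases hk with ⟨m, hm⟩; exact ⟨m+1, by omega⟩
  rw [hev.neg_pow, inv_pow]
  have hwk : w^(k+2) ≠ 0 := pow_ne_zero _ hw
  have hD : (w^(k+2))⁻¹ * W ≠ 0 := mul_ne_zero (inv_ne_zero hwk) hW
  rw [one_sub_div hD, div_eq_div_iff hD hW, hEq]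
  field_simp [twoPiI_ne]
  ring

theorem I_mul_y_mem {y : ℝ} (hy : 0 < y) : Complex.I * (y:ℂ) ∈ UHP := by
  show 0 < (Complex.I * (y:ℂ)).im
  simp [hy]

theorem I_div_y_mem {y : ℝ} (hy : 0 < y) : Complex.I / (y:ℂ) ∈ UHP := by
  show 0 < (Complex.I / (y:ℂ)).im
  rw [Complex.div_im]
  simp [Complex.normSq]
  positivity

theorem neg_inv_Iy {y : ℝ} (hy : 0 < y) : -(Complex.I * (y:ℂ))⁻¹ = Complex.I / (y:ℂ) := by
  have hy0 : (y:ℂ) ≠ 0 := Complex.ofReal_ne_zero.2 hy.ne'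
  rw [mul_inv, Complex.inv_I, div_eq_mul_inv]
  ring

theorem exp_I_div_y {y : ℝ} (hy : 0 < y) :
    Complex.exp (twoPiI * (Complex.I / (y:ℂ))) = ((Real.exp (-(2 * Real.pi / y)) : ℝ) : ℂ) := by
  have hy0 : (y:ℂ) ≠ 0 := Complex.ofReal_ne_zero.2 hy.ne'
  have h1 : twoPiI * (Complex.I / (y:ℂ)) = ((-(2 * Real.pi / y) : ℝ) : ℂ) := by
    rw [twoPiI]
    push_cast
    linear_combination (2 * (Real.pi:ℂ) / (y:ℂ)) * Complex.I_sq
  rw [h1, Complex.ofReal_exp]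

theorem half_add_mem {y : ℝ} (hy : 0 < y) : (1/2 : ℂ) + Complex.I * (y:ℂ) ∈ UHP := by
  show 0 < ((1/2 : ℂ) + Complex.I * (y:ℂ)).im
  simp [hy]

theorem half_add_div_mem {y : ℝ} (hy : 0 < y) : (1/2 : ℂ) + Complex.I / (4 * (y:ℂ)) ∈ UHP := by
  show 0 < ((1/2 : ℂ) + Complex.I / (4 * (y:ℂ))).im
  have : Complex.I / (4 * (y:ℂ)) = Complex.I / ((4*y : ℝ) : ℂ) := by push_cast; ring_nf
  rw [this]
  have := I_div_y_mem (by linarith : (0:ℝ) < 4*y)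
  simp only [Complex.add_im]
  have h2 : ((1:ℂ)/2).im = 0 := by simp
  rw [h2, zero_add]
  exact this

theorem tau_arg {y : ℝ} (hy : 0 < y) :
    (((1/2 : ℂ) + Complex.I * (y:ℂ)) - 1) / (2 * ((1/2 : ℂ) + Complex.I * (y:ℂ)) - 1)
      = (1/2 : ℂ) + Complex.I / (4 * (y:ℂ)) := by
  have hy0 : (y:ℂ) ≠ 0 := Complex.ofReal_ne_zero.2 hy.ne'
  have hden : 2 * ((1/2 : ℂ) + Complex.I * (y:ℂ)) - 1 = 2 * Complex.I * (y:ℂ) := by ring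
  rw [hden, div_eq_iff (by simp [Complex.I_ne_zero, hy0] : 2 * Complex.I * (y:ℂ) ≠ 0)]
  field_simp
  ring_nf
  rw [Complex.I_sq]
  ring

theorem two_tau_sub_one {y : ℝ} :
    2 * ((1/2 : ℂ) + Complex.I * (y:ℂ)) - 1 = 2 * Complex.I * (y:ℂ) := by ring

theorem neg_inv_2Iy {y : ℝ} (hy : 0 < y) :
    -(2 * Complex.I * (y:ℂ))⁻¹ = Complex.I / (2 * (y:ℂ)) := by
  have hy0 : (y:ℂ) ≠ 0 := Complex.ofReal_ne_zero.2 hy.ne'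
  rw [mul_inv, mul_inv, Complex.inv_I, div_eq_mul_inv, mul_inv]
  ring

theorem exp_half_add_div {y : ℝ} (hy : 0 < y) :
    Complex.exp (twoPiI * ((1/2 : ℂ) + Complex.I / (4 * (y:ℂ))))
      = ((-Real.exp (-(Real.pi / (2 * y))) : ℝ) : ℂ) := by
  have hy0 : (y:ℂ) ≠ 0 := Complex.ofReal_ne_zero.2 hy.ne'
  rw [mul_add, Complex.exp_add]
  have h1 : twoPiI * (1/2 : ℂ) = (Real.pi : ℂ) * Complex.I := by
    rw [twoPiI]; ring
  have h2 : twoPiI * (Complex.I / (4 * (y:ℂ))) = ((-(Real.pi / (2 * y)) : ℝ) : ℂ) := by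
    rw [twoPiI]
    push_cast
    linear_combination ((Real.pi:ℂ) / (2 * (y:ℂ))) * Complex.I_sq
  rw [h1, h2, Complex.exp_pi_mul_I]
  push_cast [Complex.ofReal_exp]
  ring

end Stmt15
end StatementFifteenAux4
noncomputable section StatementFifteenAux5
open Filter Topology
namespace Stmt15

theorem formula0 (k : ℕ) (hke : Even k) (c : ℕ → ℝ) (f : ℂ → ℂ)
    (hQ : HasQExp f fun n => (c n : ℂ)) (hw : IsWeaklyModular k f)
    (hb : ∀ s : ℝ, 0 < s → s < 1 → ∃ C : ℝ, ∀ n, |c n| * s ^ n ≤ C)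
    (y : ℝ) (hy : 0 < y)
    (hne : Qser c (Real.exp (-(2 * Real.pi / y))) ≠ 0) :
    1 - Dop f (Complex.I * y) / ((Complex.I / (y:ℂ)) ^ (k + 2) * Dop f (Complex.I / (y:ℂ)))
      = (((k / (2 * Real.pi) * y * (Pser c (Real.exp (-(2 * Real.pi / y))) /
          Qser c (Real.exp (-(2 * Real.pi / y)))) : ℝ)) : ℂ) := by
  set t : ℝ := Real.exp (-(2 * Real.pi / y)) with htdef
  have hs1 := summable1 c hb
  have hs2 := summable2 c hb
  have hder : ∀ z ∈ UHP, DifferentiableAt ℂ f z :=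
    fun z hz => (deriv_lemma c f hQ hs2 z hz).differentiableAt
  have hy0 : (y:ℂ) ≠ 0 := Complex.ofReal_ne_zero.2 hy.ne'
  set w : ℂ := Complex.I * (y:ℂ) with hwdef
  have hwne : w ≠ 0 := by simp [hwdef, Complex.I_ne_zero, hy0]
  have hwU : w ∈ UHP := I_mul_y_mem hy
  have hIdU : Complex.I / (y:ℂ) ∈ UHP := I_div_y_mem hy
  -- values at I/y
  have hV : f (Complex.I / (y:ℂ)) = ((Pser c t : ℝ) : ℂ) :=
    value_lemma c f hQ hs1 _ hIdU t (exp_I_div_y hy)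
  have hW : Dop f (Complex.I / (y:ℂ)) = ((Qser c t : ℝ) : ℂ) :=
    dop_value c f hQ hs2 _ hIdU t (exp_I_div_y hy)
  have hWne : ((Qser c t : ℝ) : ℂ) ≠ 0 := Complex.ofReal_ne_zero.2 hne
  -- transformation
  have htr := transform_S_deriv k f hw hder w hwU
  rw [neg_inv_Iy hy] at htr
  have htv := transform_S_val k f hw w hwU hwne
  rw [neg_inv_Iy hy] at htv
  -- hEq
  have hEq : ((Qser c t : ℝ) : ℂ) = w^(k+2) * Dop f w
      + (((k:ℂ))/twoPiI) * w * ((Pser c t : ℝ) : ℂ) := by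
    rw [← hW, ← hV, htr, htv]
    rw [pow_succ]
    ring
  have hkey := key_alg k hke (Dop f w) ((Pser c t : ℝ) : ℂ) ((Qser c t : ℝ) : ℂ) w (k:ℂ)
    hwne hWne hEq
  rw [neg_inv_Iy hy] at hkey
  rw [hW, hkey]
  -- final cast identity
  rw [twoPiI]
  have hpi : (Real.pi : ℂ) ≠ 0 := Complex.ofReal_ne_zero.2 Real.pi_ne_zero
  push_cast
  field_simp
  ring_nf
  try rw [Complex.I_sq]
  try ring

theorem formula1 (k : ℕ) (hke : Even k) (c : ℕ → ℝ) (f : ℂ → ℂ)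
    (hQ : HasQExp f fun n => (c n : ℂ)) (hw : IsWeaklyModular k f)
    (hb : ∀ s : ℝ, 0 < s → s < 1 → ∃ C : ℝ, ∀ n, |c n| * s ^ n ≤ C)
    (y : ℝ) (hy : 0 < y)
    (hne : Qser c (-Real.exp (-(Real.pi / (2 * y)))) ≠ 0) :
    1 - Dop f ((1/2 : ℂ) + Complex.I * y) /
        ((Complex.I / (2 * (y:ℂ))) ^ (k + 2) * Dop f ((1/2 : ℂ) + Complex.I / (4 * (y:ℂ))))
      = (((2 * k / Real.pi * y * (Pser c (-Real.exp (-(Real.pi / (2 * y)))) /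
          Qser c (-Real.exp (-(Real.pi / (2 * y))))) : ℝ)) : ℂ) := by
  set u : ℝ := -Real.exp (-(Real.pi / (2 * y))) with hudef
  have hs1 := summable1 c hb
  have hs2 := summable2 c hb
  have hder : ∀ z ∈ UHP, DifferentiableAt ℂ f z :=
    fun z hz => (deriv_lemma c f hQ hs2 z hz).differentiableAt
  have hy0 : (y:ℂ) ≠ 0 := Complex.ofReal_ne_zero.2 hy.ne'
  set τ : ℂ := (1/2 : ℂ) + Complex.I * (y:ℂ) with hτdef
  have hτU : τ ∈ UHP := half_add_mem hy
  set w : ℂ := 2 * Complex.I * (y:ℂ) with hwdef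
  have hwne : w ≠ 0 := by simp [hwdef, Complex.I_ne_zero, hy0]
  have hγU : (1/2 : ℂ) + Complex.I / (4 * (y:ℂ)) ∈ UHP := half_add_div_mem hy
  have hV : f ((1/2 : ℂ) + Complex.I / (4 * (y:ℂ))) = ((Pser c u : ℝ) : ℂ) :=
    value_lemma c f hQ hs1 _ hγU u (by rw [hudef]; exact_mod_cast exp_half_add_div hy)
  have hW : Dop f ((1/2 : ℂ) + Complex.I / (4 * (y:ℂ))) = ((Qser c u : ℝ) : ℂ) :=
    dop_value c f hQ hs2 _ hγU u (by rw [hudef]; exact_mod_cast exp_half_add_div hy)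
  have hWne : ((Qser c u : ℝ) : ℂ) ≠ 0 := Complex.ofReal_ne_zero.2 hne
  have htr := transform_T1_deriv k f hw hder τ hτU
  rw [tau_arg hy, two_tau_sub_one, ← hwdef] at htr
  have htv := transform_T1_val k f hw τ hτU
  rw [tau_arg hy, two_tau_sub_one, ← hwdef] at htv
  have hEq : ((Qser c u : ℝ) : ℂ) = w^(k+2) * Dop f τ
      + (((2*k:ℕ):ℂ)/twoPiI) * w * ((Pser c u : ℝ) : ℂ) := by
    rw [← hW, ← hV, htr, htv]
    rw [pow_succ]
    push_cast
    ring
  have hkey := key_alg k hke (Dop f τ) ((Pser c u : ℝ) : ℂ) ((Qser c u : ℝ) : ℂ) w ((2*k:ℕ):ℂ)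
    hwne hWne hEq
  rw [neg_inv_2Iy hy] at hkey
  rw [hW, hkey]
  rw [twoPiI]
  have hpi : (Real.pi : ℂ) ≠ 0 := Complex.ofReal_ne_zero.2 Real.pi_ne_zero
  push_cast
  field_simp
  ring_nf
  try rw [Complex.I_sq]
  try ring

end Stmt15
end StatementFifteenAux5
noncomputable section StatementFifteenAux6
open Filter Topology
namespace Stmt15

theorem sign_mul_self' {r : ℝ} (hr : r ≠ 0) : Real.sign r * r = |r| := by
  rcases hr.lt_or_gt with h | h
  · rw [Real.sign_of_neg h, abs_of_neg h]; ring
  · rw [Real.sign_of_pos h, abs_of_pos h]; ring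

theorem sign_abs_one {r : ℝ} (hr : r ≠ 0) : |Real.sign r| = 1 := by
  rcases hr.lt_or_gt with h | h
  · rw [Real.sign_of_neg h]; norm_num
  · rw [Real.sign_of_pos h]; norm_num

theorem sign_prod {x y : ℝ} (hx : x ≠ 0) (hy : y ≠ 0) :
    Real.sign (x * y) = Real.sign x * Real.sign y := by
  rcases hx.lt_or_gt with h | h <;> rcases hy.lt_or_gt with h' | h'
  · rw [Real.sign_of_pos (mul_pos_of_neg_of_neg h h'), Real.sign_of_neg h, Real.sign_of_neg h']
    norm_num
  · rw [Real.sign_of_neg (mul_neg_of_neg_of_pos h h'), Real.sign_of_neg h, Real.sign_of_pos h']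
    norm_num
  · rw [Real.sign_of_neg (mul_neg_of_pos_of_neg h h'), Real.sign_of_pos h, Real.sign_of_neg h']
    norm_num
  · rw [Real.sign_of_pos (mul_pos h h'), Real.sign_of_pos h, Real.sign_of_pos h']
    norm_num

theorem sign_neg' (r : ℝ) : Real.sign (-r) = -Real.sign r := by
  rcases lt_trichotomy r 0 with h | h | h
  · rw [Real.sign_of_neg h, Real.sign_of_pos (by linarith)]; try ring
  · rw [h]; simp
  · rw [Real.sign_of_pos h, Real.sign_of_neg (by linarith)]; try ring

-- sum over range (n₀+1) of a function vanishing on 1..n₀-1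
theorem sum_range_n0 (g : ℕ → ℝ) (n₀ : ℕ) (hn₀ : 1 ≤ n₀)
    (h : ∀ i, 1 ≤ i → i < n₀ → g i = 0) :
    ∑ i ∈ Finset.range (n₀ + 1), g i = g 0 + g n₀ := by
  rw [Finset.sum_range_succ]
  congr 1
  rw [Finset.sum_eq_single 0]
  · intro b hb hb0
    exact h b (Nat.one_le_iff_ne_zero.2 hb0) (Finset.mem_range.1 hb)
  · intro h0
    exact absurd (Finset.mem_range.2 (by omega : 0 < n₀)) h0

theorem tailP (c : ℕ → ℝ)
    (hb : ∀ s : ℝ, 0 < s → s < 1 → ∃ C : ℝ, ∀ n, |c n| * s ^ n ≤ C) :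
    ∃ K : ℝ, 0 ≤ K ∧ ∀ v : ℝ, 0 ≤ v → v ≤ 1/2 → |Pser c v - c 0| ≤ K * v := by
  have hs1 := summable1 c hb
  have hhalf := hs1 (1/2) (by norm_num) (by norm_num)
  have hsh : Summable (fun n : ℕ => |c (n+1)| * (1/2:ℝ) ^ n) := by
    have h2 := (summable_nat_add_iff 1).2 hhalf
    have := h2.mul_left 2
    refine this.congr fun n => ?_
    rw [pow_succ]
    ring
  refine ⟨∑' n : ℕ, |c (n+1)| * (1/2:ℝ) ^ n, tsum_nonneg (fun n => by positivity), ?_⟩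
  intro v hv0 hv1
  have hv1' : v < 1 := by linarith
  have hsv : Summable (fun n : ℕ => c n * v ^ n) := by
    apply Summable.of_abs
    refine (hs1 v hv0 hv1').of_nonneg_of_le (fun n => abs_nonneg _) (fun n => ?_)
    rw [abs_mul, abs_pow, abs_of_nonneg hv0]
  have hsplit := Summable.sum_add_tsum_nat_add (f := fun n : ℕ => c n * v ^ n) 1 hsv
  have h0 : ∑ i ∈ Finset.range 1, c i * v ^ i = c 0 := by simp
  have hPv : Pser c v - c 0 = ∑' n : ℕ, c (n+1) * v ^ (n+1) := by
    rw [Pser, ← hsplit, h0]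
    ring
  rw [hPv]
  have hterm : ∀ n : ℕ, |c (n+1) * v ^ (n+1)| ≤ (|c (n+1)| * (1/2:ℝ)^n) * v := by
    intro n
    rw [abs_mul, abs_pow, abs_of_nonneg hv0, pow_succ]
    have : v ^ n ≤ (1/2:ℝ) ^ n := pow_le_pow_left₀ hv0 hv1 n
    have h2 : v ^ n * v ≤ (1/2:ℝ)^n * v := mul_le_mul_of_nonneg_right this hv0
    calc |c (n+1)| * (v ^ n * v) ≤ |c (n+1)| * ((1/2:ℝ)^n * v) :=
          mul_le_mul_of_nonneg_left h2 (abs_nonneg _)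
      _ = |c (n+1)| * (1/2:ℝ)^n * v := by ring
  have hsabs : Summable (fun n : ℕ => |c (n+1) * v ^ (n+1)|) :=
    (hsh.mul_right v).of_nonneg_of_le (fun n => abs_nonneg _) hterm
  calc |∑' n : ℕ, c (n+1) * v ^ (n+1)| ≤ ∑' n : ℕ, |c (n+1) * v ^ (n+1)| := by
        have hnorm := norm_tsum_le_tsum_norm (f := fun n : ℕ => c (n+1) * v ^ (n+1))
          (by simp only [Real.norm_eq_abs]; exact hsabs)
        simp only [Real.norm_eq_abs] at hnorm
        exact hnorm
    _ ≤ ∑' n : ℕ, (|c (n+1)| * (1/2:ℝ)^n) * v := Summable.tsum_le_tsum hterm hsabs (hsh.mul_right v)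
    _ = (∑' n : ℕ, |c (n+1)| * (1/2:ℝ)^n) * v := tsum_mul_right

theorem tailQ (c : ℕ → ℝ) (n₀ : ℕ) (hn₀ : 1 ≤ n₀)
    (hmin : ∀ i, 1 ≤ i → i < n₀ → c i = 0)
    (hb : ∀ s : ℝ, 0 < s → s < 1 → ∃ C : ℝ, ∀ n, |c n| * s ^ n ≤ C) :
    ∃ K : ℝ, 0 ≤ K ∧ ∀ v : ℝ, 0 ≤ v → v ≤ 1/2 →
      |Qser c v - n₀ * c n₀ * v ^ n₀| ≤ K * v ^ (n₀ + 1) := by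
  have hs2 := summable2 c hb
  have hhalf := hs2 (1/2) (by norm_num) (by norm_num)
  have hsh : Summable (fun n : ℕ => ((n + n₀ + 1 : ℕ) : ℝ) * |c (n+n₀+1)| * (1/2:ℝ) ^ n) := by
    have h2 := (summable_nat_add_iff (n₀+1)).2 hhalf
    have h3 := h2.mul_left ((2:ℝ) ^ (n₀+1))
    refine h3.congr fun n => ?_
    have : ((1:ℝ)/2) ^ (n + (n₀+1)) = (1/2)^n * (1/2)^(n₀+1) := by rw [pow_add]
    push_cast
    rw [this]
    have h12 : ((1:ℝ)/2)^n₀ * 2^n₀ = 1 := by rw [← mul_pow]; norm_num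
    field_simp
    ring_nf
    linear_combination ((n:ℝ) * |c (1 + n₀ + n)| + n₀ * |c (1 + n₀ + n)| + |c (1 + n₀ + n)|) * h12
  refine ⟨∑' n : ℕ, ((n + n₀ + 1 : ℕ) : ℝ) * |c (n+n₀+1)| * (1/2:ℝ) ^ n,
    tsum_nonneg (fun n => by positivity), ?_⟩
  intro v hv0 hv1
  have hv1' : v < 1 := by linarith
  have hsv : Summable (fun n : ℕ => (n:ℝ) * (c n * v ^ n)) := by
    apply Summable.of_abs
    refine (hs2 v hv0 hv1').of_nonneg_of_le (fun n => abs_nonneg _) (fun n => ?_)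
    rw [abs_mul, abs_mul, abs_pow, abs_of_nonneg hv0, Nat.abs_cast]
  have hsplit := Summable.sum_add_tsum_nat_add (f := fun n : ℕ => (n:ℝ) * (c n * v ^ n)) (n₀+1) hsv
  have h0 : ∑ i ∈ Finset.range (n₀+1), (i:ℝ) * (c i * v ^ i) = n₀ * c n₀ * v ^ n₀ := by
    rw [sum_range_n0 _ n₀ hn₀ (fun i hi1 hi2 => by rw [hmin i hi1 hi2]; ring)]
    simp
    ring
  have hQv : Qser c v - n₀ * c n₀ * v ^ n₀
      = ∑' n : ℕ, ((n + (n₀+1) : ℕ):ℝ) * (c (n+(n₀+1)) * v ^ (n+(n₀+1))) := by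
    rw [Qser, ← hsplit, h0]
    ring
  rw [hQv]
  have hterm : ∀ n : ℕ, |((n + (n₀+1) : ℕ):ℝ) * (c (n+(n₀+1)) * v ^ (n+(n₀+1)))|
      ≤ (((n + n₀ + 1 : ℕ):ℝ) * |c (n+n₀+1)| * (1/2:ℝ)^n) * v ^ (n₀+1) := by
    intro n
    rw [abs_mul, abs_mul, abs_pow, abs_of_nonneg hv0, Nat.abs_cast]
    have hvp : v ^ (n + (n₀+1)) = v ^ n * v ^ (n₀+1) := pow_add v n (n₀+1)
    have h1 : v ^ n ≤ (1/2:ℝ) ^ n := pow_le_pow_left₀ hv0 hv1 n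
    have h2 : v ^ n * v ^ (n₀+1) ≤ (1/2:ℝ)^n * v ^ (n₀+1) :=
      mul_le_mul_of_nonneg_right h1 (by positivity)
    rw [hvp]
    have hc : (0:ℝ) ≤ ((n + (n₀+1) : ℕ):ℝ) * |c (n+(n₀+1))| := by positivity
    calc ((n + (n₀+1) : ℕ):ℝ) * (|c (n+(n₀+1))| * (v ^ n * v ^ (n₀+1)))
        ≤ ((n + (n₀+1) : ℕ):ℝ) * (|c (n+(n₀+1))| * ((1/2:ℝ)^n * v ^ (n₀+1))) := by
          apply mul_le_mul_of_nonneg_left _ (Nat.cast_nonneg _)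
          exact mul_le_mul_of_nonneg_left h2 (abs_nonneg _)
      _ = (((n + n₀ + 1 : ℕ):ℝ) * |c (n+n₀+1)| * (1/2:ℝ)^n) * v ^ (n₀+1) := by
          have : n + (n₀+1) = n + n₀ + 1 := by omega
          rw [this]
          ring
  have hsabs : Summable (fun n : ℕ => |((n + (n₀+1) : ℕ):ℝ) * (c (n+(n₀+1)) * v ^ (n+(n₀+1)))|) :=
    (hsh.mul_right _).of_nonneg_of_le (fun n => abs_nonneg _) hterm
  calc |∑' n : ℕ, ((n + (n₀+1) : ℕ):ℝ) * (c (n+(n₀+1)) * v ^ (n+(n₀+1)))|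
      ≤ ∑' n : ℕ, |((n + (n₀+1) : ℕ):ℝ) * (c (n+(n₀+1)) * v ^ (n+(n₀+1)))| := by
        have hnorm := norm_tsum_le_tsum_norm
          (f := fun n : ℕ => ((n + (n₀+1) : ℕ):ℝ) * (c (n+(n₀+1)) * v ^ (n+(n₀+1))))
          (by simp only [Real.norm_eq_abs]; exact hsabs)
        simp only [Real.norm_eq_abs] at hnorm
        exact hnorm
    _ ≤ ∑' n : ℕ, (((n + n₀ + 1 : ℕ):ℝ) * |c (n+n₀+1)| * (1/2:ℝ)^n) * v ^ (n₀+1) :=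
        Summable.tsum_le_tsum hterm hsabs (hsh.mul_right _)
    _ = (∑' n : ℕ, ((n + n₀ + 1 : ℕ):ℝ) * |c (n+n₀+1)| * (1/2:ℝ)^n) * v ^ (n₀+1) := tsum_mul_right

end Stmt15
end StatementFifteenAux6
noncomputable section StatementFifteenAux7
open Filter Topology
namespace Stmt15

theorem growth (b : ℝ) (hb : 0 < b) :
    Tendsto (fun y : ℝ => y * Real.exp (b / y)) (nhdsWithin 0 (Set.Ioi 0)) atTop := by
  have h1 : Tendsto (fun x : ℝ => Real.exp x / x) atTop atTop :=
    Real.tendsto_exp_div_pow_atTop 1 |>.congr (by intro x; rw [pow_one])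
  have h2 : Tendsto (fun x : ℝ => b * x) atTop atTop :=
    Tendsto.const_mul_atTop hb tendsto_id
  have h3 : Tendsto (fun x : ℝ => b * (Real.exp (b * x) / (b * x))) atTop atTop :=
    Tendsto.const_mul_atTop hb (h1.comp h2)
  have h4 : Tendsto (fun x : ℝ => Real.exp (b * x) / x) atTop atTop := by
    refine h3.congr' ?_
    filter_upwards [eventually_gt_atTop 0] with x hx
    field_simp
  have h5 : Tendsto (fun y : ℝ => y⁻¹) (nhdsWithin 0 (Set.Ioi 0)) atTop := tendsto_inv_nhdsGT_zero
  have h6 := h4.comp h5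
  refine h6.congr' ?_
  filter_upwards [self_mem_nhdsWithin] with y hy
  have hy0 : (0:ℝ) < y := hy
  simp only [Function.comp]
  rw [show b * y⁻¹ = b / y from (div_eq_mul_inv b y).symm, div_eq_mul_inv, inv_inv, mul_comm]

theorem vtend (a : ℝ) (ha : 0 < a) :
    Tendsto (fun y : ℝ => Real.exp (-(a / y))) (nhdsWithin 0 (Set.Ioi 0)) (nhds 0) := by
  have h1 : Tendsto (fun y : ℝ => a / y) (nhdsWithin 0 (Set.Ioi 0)) atTop := by
    have := Tendsto.const_mul_atTop ha (tendsto_inv_nhdsGT_zero (𝕜 := ℝ))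
    refine this.congr fun y => ?_
    rw [div_eq_mul_inv]
  have h2 : Tendsto (fun y : ℝ => -(a / y)) (nhdsWithin 0 (Set.Ioi 0)) atBot :=
    tendsto_neg_atBot_iff.2 h1
  exact Real.tendsto_exp_atBot.comp h2

theorem core (c : ℕ → ℝ)
    (hb : ∀ s : ℝ, 0 < s → s < 1 → ∃ C : ℝ, ∀ n, |c n| * s ^ n ≤ C)
    (h0 : c 0 ≠ 0) (n₀ : ℕ) (hn₀ : 1 ≤ n₀) (hcn₀ : c n₀ ≠ 0)
    (hmin : ∀ i, 1 ≤ i → i < n₀ → c i = 0) (a : ℝ) (ha : 0 < a) (C : ℝ) (hC : 0 < C) :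
    (∀ᶠ y in nhdsWithin (0:ℝ) (Set.Ioi 0), Qser c (Real.exp (-(a/y))) ≠ 0) ∧
    Tendsto (fun y => Real.sign (c 0 * c n₀) *
        (C * y * (Pser c (Real.exp (-(a/y))) / Qser c (Real.exp (-(a/y))))))
      (nhdsWithin (0:ℝ) (Set.Ioi 0)) atTop := by
  obtain ⟨K₁, hK₁0, hK₁⟩ := tailP c hb
  obtain ⟨K₂, hK₂0, hK₂⟩ := tailQ c n₀ hn₀ hmin hb
  set s0 := Real.sign (c 0) with hs0def
  set sn := Real.sign (c n₀) with hsndef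
  have hs0c : s0 * c 0 = |c 0| := sign_mul_self' h0
  have hsnc : sn * c n₀ = |c n₀| := sign_mul_self' hcn₀
  have hs0a : |s0| = 1 := sign_abs_one h0
  have hsna : |sn| = 1 := sign_abs_one hcn₀
  have hsn2 : sn * sn = 1 := by
    have := abs_mul_abs_self sn
    rw [hsna] at this
    linarith [this]
  have hc0pos : 0 < |c 0| := abs_pos.2 h0
  have hcnpos : 0 < |c n₀| := abs_pos.2 hcn₀
  set v₀ : ℝ := min (1/2) (min (|c 0| / (2 * (K₁ + 1))) ((n₀ * |c n₀|) / (2 * (K₂ + 1)))) with hv₀def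
  have hn₀pos : (0:ℝ) < n₀ := by exact_mod_cast hn₀
  have hv₀pos : 0 < v₀ := by
    apply lt_min (by norm_num)
    apply lt_min
    · positivity
    · positivity
  set v : ℝ → ℝ := fun y => Real.exp (-(a/y)) with hvdef
  have hvev : ∀ᶠ y in nhdsWithin (0:ℝ) (Set.Ioi 0), v y ≤ v₀ ∧ 0 < y := by
    have h1 := (vtend a ha).eventually (eventually_le_nhds hv₀pos)
    filter_upwards [h1, self_mem_nhdsWithin] with y h2 h3
    exact ⟨h2, h3⟩
  -- pointwise estimates
  have hest : ∀ y : ℝ, 0 < y → v y ≤ v₀ →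
      (Qser c (v y) ≠ 0 ∧
       C * ((|c 0| / 2) / ((3/2 * (n₀ * |c n₀|)) * (v y)^n₀)) * y ≤
         s0 * sn * (C * y * (Pser c (v y) / Qser c (v y)))) := by
    intro y hy hvle
    have hv0 : 0 < v y := Real.exp_pos _
    have hv12 : v y ≤ 1/2 := le_trans hvle (min_le_left _ _)
    have hvK1 : v y ≤ |c 0| / (2 * (K₁ + 1)) :=
      le_trans hvle (le_trans (min_le_right _ _) (min_le_left _ _))
    have hvK2 : v y ≤ (n₀ * |c n₀|) / (2 * (K₂ + 1)) :=
      le_trans hvle (le_trans (min_le_right _ _) (min_le_right _ _))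
    have hP := hK₁ (v y) hv0.le hv12
    have hQ := hK₂ (v y) hv0.le hv12
    -- |P - c0| ≤ |c0|/2
    have hPb : |Pser c (v y) - c 0| ≤ |c 0| / 2 := by
      refine le_trans hP ?_
      have h2 : K₁ * v y ≤ K₁ * (|c 0| / (2 * (K₁ + 1))) :=
        mul_le_mul_of_nonneg_left hvK1 hK₁0
      refine le_trans h2 ?_
      have : K₁ * (|c 0| / (2 * (K₁ + 1))) = |c 0| * (K₁ / (K₁ + 1)) / 2 := by
        field_simp
      rw [this]
      have h3 : K₁ / (K₁ + 1) ≤ 1 := by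
        rw [div_le_one (by linarith)]
        linarith
      calc |c 0| * (K₁ / (K₁ + 1)) / 2 ≤ |c 0| * 1 / 2 := by
            have := mul_le_mul_of_nonneg_left h3 (abs_nonneg (c 0))
            linarith
        _ = |c 0| / 2 := by ring
    -- |Q - n₀ c_{n₀} v^{n₀}| ≤ (n₀ |c n₀|/2) v^n₀
    have hQb : |Qser c (v y) - n₀ * c n₀ * (v y) ^ n₀| ≤ (n₀ * |c n₀| / 2) * (v y) ^ n₀ := by
      refine le_trans hQ ?_
      rw [pow_succ]
      have h2 : K₂ * ((v y) ^ n₀ * v y) = (K₂ * v y) * (v y)^n₀ := by ring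
      rw [h2]
      apply mul_le_mul_of_nonneg_right _ (by positivity)
      have h3 : K₂ * v y ≤ K₂ * ((n₀ * |c n₀|) / (2 * (K₂ + 1))) :=
        mul_le_mul_of_nonneg_left hvK2 hK₂0
      refine le_trans h3 ?_
      have h4 : K₂ / (K₂ + 1) ≤ 1 := by
        rw [div_le_one (by linarith)]
        linarith
      have h5 : K₂ * ((n₀ * |c n₀|) / (2 * (K₂ + 1))) = (n₀ * |c n₀|) * (K₂ / (K₂ + 1)) / 2 := by
        field_simp
      rw [h5]
      have h6 := mul_le_mul_of_nonneg_left h4 (by positivity : (0:ℝ) ≤ n₀ * |c n₀|)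
      linarith
    -- lower bound for s0 * P
    have hPlow : |c 0| / 2 ≤ s0 * Pser c (v y) := by
      have h1 : s0 * Pser c (v y) = |c 0| + s0 * (Pser c (v y) - c 0) := by
        rw [← hs0c]; ring
      rw [h1]
      have h2 : -(|c 0|/2) ≤ s0 * (Pser c (v y) - c 0) := by
        have h3 : |s0 * (Pser c (v y) - c 0)| ≤ |c 0|/2 := by
          rw [abs_mul, hs0a, one_mul]; exact hPb
        linarith [neg_abs_le (s0 * (Pser c (v y) - c 0))]
      linarith
    -- bounds for sn * Q
    have hQlow : (n₀ * |c n₀| / 2) * (v y) ^ n₀ ≤ sn * Qser c (v y) := by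
      have h1 : sn * Qser c (v y) = n₀ * |c n₀| * (v y)^n₀ + sn * (Qser c (v y) - n₀ * c n₀ * (v y)^n₀) := by
        rw [← hsnc]; ring
      rw [h1]
      have h3 : |sn * (Qser c (v y) - n₀ * c n₀ * (v y)^n₀)| ≤ (n₀ * |c n₀| / 2) * (v y) ^ n₀ := by
        rw [abs_mul, hsna, one_mul]; exact hQb
      have h4 := neg_abs_le (sn * (Qser c (v y) - n₀ * c n₀ * (v y)^n₀))
      linarith [h3, h4]
    have hQhi : sn * Qser c (v y) ≤ (3/2 * (n₀ * |c n₀|)) * (v y) ^ n₀ := by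
      have h1 : sn * Qser c (v y) = n₀ * |c n₀| * (v y)^n₀ + sn * (Qser c (v y) - n₀ * c n₀ * (v y)^n₀) := by
        rw [← hsnc]; ring
      rw [h1]
      have h3 : |sn * (Qser c (v y) - n₀ * c n₀ * (v y)^n₀)| ≤ (n₀ * |c n₀| / 2) * (v y) ^ n₀ := by
        rw [abs_mul, hsna, one_mul]; exact hQb
      have h4 := le_abs_self (sn * (Qser c (v y) - n₀ * c n₀ * (v y)^n₀))
      linarith [h3, h4]
    have hQpos : 0 < sn * Qser c (v y) := by
      have : (0:ℝ) < (n₀ * |c n₀| / 2) * (v y) ^ n₀ := by positivity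
      linarith
    have hQneZ : Qser c (v y) ≠ 0 := by
      intro h
      rw [h, mul_zero] at hQpos
      exact lt_irrefl 0 hQpos
    refine ⟨hQneZ, ?_⟩
    -- rewrite target
    have hsnne : sn ≠ 0 := by intro h; rw [h] at hsna; simp at hsna
    have hsninv : sn⁻¹ = sn := (eq_inv_of_mul_eq_one_left hsn2).symm
    have hrw : s0 * sn * (C * y * (Pser c (v y) / Qser c (v y)))
        = C * ((s0 * Pser c (v y)) / (sn * Qser c (v y))) * y := by
      rw [div_eq_mul_inv (s0 * Pser c (v y)), mul_inv, hsninv, div_eq_mul_inv]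
      ring
    rw [hrw]
    have hfrac : (|c 0| / 2) / ((3/2 * (n₀ * |c n₀|)) * (v y)^n₀)
        ≤ (s0 * Pser c (v y)) / (sn * Qser c (v y)) := by
      apply div_le_div₀ (le_trans (by positivity) hPlow) hPlow hQpos hQhi
    have := mul_le_mul_of_nonneg_left hfrac hC.le
    exact mul_le_mul_of_nonneg_right this hy.le
  constructor
  · filter_upwards [hvev] with y hy
    exact (hest y hy.2 hy.1).1
  · -- tendsto
    set C' : ℝ := C * (|c 0| / 2) / (3/2 * (n₀ * |c n₀|)) with hC'def
    have hC' : 0 < C' := by positivity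
    have hlow : Tendsto (fun y : ℝ => C' * (y * Real.exp (a * n₀ / y)))
        (nhdsWithin (0:ℝ) (Set.Ioi 0)) atTop :=
      Tendsto.const_mul_atTop hC' (growth (a * n₀) (by positivity))
    apply tendsto_atTop_mono' _ _ hlow
    filter_upwards [hvev] with y hy
    obtain ⟨hvle, hy0⟩ := hy
    have h1 := (hest y hy0 hvle).2
    have hsgn : Real.sign (c 0 * c n₀) = s0 * sn := sign_prod h0 hcn₀
    rw [hsgn]
    refine le_trans ?_ h1
    -- C' * (y * exp(a n₀ / y)) ≤ C * ((|c0|/2) / ((3/2 n₀|c n₀|) v^n₀)) * y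
    have hv0 : 0 < v y := Real.exp_pos _
    have hvpow : (v y) ^ n₀ = Real.exp (-(a * n₀ / y)) := by
      rw [hvdef]
      rw [← Real.exp_nat_mul]
      congr 1
      ring
    have hexp : Real.exp (a * n₀ / y) = ((v y) ^ n₀)⁻¹ := by
      rw [hvpow, ← Real.exp_neg, neg_neg]
    rw [hexp]
    have heq : C * ((|c 0| / 2) / ((3/2 * (n₀ * |c n₀|)) * (v y)^n₀)) * y
        = C' * (y * ((v y)^n₀)⁻¹) := by
      rw [hC'def]
      field_simp
      try ring
    rw [heq]

end Stmt15
end StatementFifteenAux7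
noncomputable section StatementFifteenAux8
open Filter Topology Metric
namespace Stmt15

theorem tailP2 (c : ℕ → ℝ) (n₀ : ℕ) (hn₀ : 1 ≤ n₀)
    (hmin : ∀ i, 1 ≤ i → i < n₀ → c i = 0)
    (hb : ∀ s : ℝ, 0 < s → s < 1 → ∃ C : ℝ, ∀ n, |c n| * s ^ n ≤ C) :
    ∃ K : ℝ, 0 ≤ K ∧ ∀ v : ℝ, 0 ≤ v → v ≤ 1/2 →
      |Pser c v - c 0 - c n₀ * v ^ n₀| ≤ K * v ^ (n₀ + 1) := by
  have hs1 := summable1 c hb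
  have hhalf := hs1 (1/2) (by norm_num) (by norm_num)
  have hsh : Summable (fun n : ℕ => |c (n+n₀+1)| * (1/2:ℝ) ^ n) := by
    have h2 := (summable_nat_add_iff (n₀+1)).2 hhalf
    have h3 := h2.mul_left ((2:ℝ) ^ (n₀+1))
    refine h3.congr fun n => ?_
    have hidx : n + (n₀ + 1) = n + n₀ + 1 := by omega
    rw [← hidx, pow_add]
    have h12 : ((1:ℝ)/2)^n₀ * 2^n₀ = 1 := by rw [← mul_pow]; norm_num
    field_simp
    ring_nf
    linear_combination |c (1 + n₀ + n)| * (1/2:ℝ)^n * h12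
  refine ⟨∑' n : ℕ, |c (n+n₀+1)| * (1/2:ℝ) ^ n,
    tsum_nonneg (fun n => by positivity), ?_⟩
  intro v hv0 hv1
  have hv1' : v < 1 := by linarith
  have hsv : Summable (fun n : ℕ => c n * v ^ n) := by
    apply Summable.of_abs
    refine (hs1 v hv0 hv1').of_nonneg_of_le (fun n => abs_nonneg _) (fun n => ?_)
    rw [abs_mul, abs_pow, abs_of_nonneg hv0]
  have hsplit := Summable.sum_add_tsum_nat_add (f := fun n : ℕ => c n * v ^ n) (n₀+1) hsv
  have h0 : ∑ i ∈ Finset.range (n₀+1), c i * v ^ i = c 0 + c n₀ * v ^ n₀ := by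
    rw [sum_range_n0 _ n₀ hn₀ (fun i hi1 hi2 => by rw [hmin i hi1 hi2]; ring)]
    simp
  have hPv : Pser c v - c 0 - c n₀ * v ^ n₀
      = ∑' n : ℕ, c (n+(n₀+1)) * v ^ (n+(n₀+1)) := by
    rw [Pser, ← hsplit, h0]
    ring
  rw [hPv]
  have hterm : ∀ n : ℕ, |c (n+(n₀+1)) * v ^ (n+(n₀+1))|
      ≤ (|c (n+n₀+1)| * (1/2:ℝ)^n) * v ^ (n₀+1) := by
    intro n
    rw [abs_mul, abs_pow, abs_of_nonneg hv0]
    have hvp : v ^ (n + (n₀+1)) = v ^ n * v ^ (n₀+1) := pow_add v n (n₀+1)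
    have h1 : v ^ n ≤ (1/2:ℝ) ^ n := pow_le_pow_left₀ hv0 hv1 n
    have h2 : v ^ n * v ^ (n₀+1) ≤ (1/2:ℝ)^n * v ^ (n₀+1) :=
      mul_le_mul_of_nonneg_right h1 (by positivity)
    rw [hvp, show n + (n₀+1) = n + n₀ + 1 by omega]
    calc |c (n+n₀+1)| * (v ^ n * v ^ (n₀+1)) ≤ |c (n+n₀+1)| * ((1/2:ℝ)^n * v ^ (n₀+1)) :=
          mul_le_mul_of_nonneg_left h2 (abs_nonneg _)
      _ = (|c (n+n₀+1)| * (1/2:ℝ)^n) * v ^ (n₀+1) := by ring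
  have hsabs : Summable (fun n : ℕ => |c (n+(n₀+1)) * v ^ (n+(n₀+1))|) :=
    (hsh.mul_right _).of_nonneg_of_le (fun n => abs_nonneg _) hterm
  calc |∑' n : ℕ, c (n+(n₀+1)) * v ^ (n+(n₀+1))|
      ≤ ∑' n : ℕ, |c (n+(n₀+1)) * v ^ (n+(n₀+1))| := by
        have hnorm := norm_tsum_le_tsum_norm (f := fun n : ℕ => c (n+(n₀+1)) * v ^ (n+(n₀+1)))
          (by simp only [Real.norm_eq_abs]; exact hsabs)
        simp only [Real.norm_eq_abs] at hnorm
        exact hnorm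
    _ ≤ ∑' n : ℕ, (|c (n+n₀+1)| * (1/2:ℝ)^n) * v ^ (n₀+1) :=
        Summable.tsum_le_tsum hterm hsabs (hsh.mul_right _)
    _ = (∑' n : ℕ, |c (n+n₀+1)| * (1/2:ℝ)^n) * v ^ (n₀+1) := tsum_mul_right

-- the power series function on the unit disc
def Fser (c : ℕ → ℝ) : ℂ → ℂ := fun w => ∑' n : ℕ, (c n : ℂ) * w ^ n

theorem Fser_hasSum (c : ℕ → ℝ)
    (hb : ∀ s : ℝ, 0 < s → s < 1 → ∃ C : ℝ, ∀ n, |c n| * s ^ n ≤ C)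
    (w : ℂ) (hw : ‖w‖ < 1) : HasSum (fun n : ℕ => (c n : ℂ) * w ^ n) (Fser c w) := by
  have hs1 := summable1 c hb
  have : Summable (fun n : ℕ => (c n : ℂ) * w ^ n) := by
    apply Summable.of_norm
    refine (hs1 ‖w‖ (norm_nonneg w) hw).of_nonneg_of_le (fun n => norm_nonneg _) (fun n => ?_)
    rw [norm_mul, norm_pow, Complex.norm_real, Real.norm_eq_abs]
  exact this.hasSum

theorem Fser_diff (c : ℕ → ℝ)
    (hb : ∀ s : ℝ, 0 < s → s < 1 → ∃ C : ℝ, ∀ n, |c n| * s ^ n ≤ C) :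
    DifferentiableOn ℂ (Fser c) (ball (0:ℂ) 1) := by
  intro w₀ hw₀
  have hw₀n : ‖w₀‖ < 1 := by simpa [dist_eq_norm] using hw₀
  set r : ℝ := (1 + ‖w₀‖) / 2 with hrdef
  have hr0 : 0 < r := by positivity
  have hr1 : r < 1 := by rw [hrdef]; linarith
  have hwr : ‖w₀‖ < r := by rw [hrdef]; linarith
  set t : Set ℂ := ball (0:ℂ) r with htdef
  have hto : IsOpen t := isOpen_ball
  have htc : Convex ℝ t := convex_ball 0 r
  have hw₀t : w₀ ∈ t := by simpa [htdef, dist_eq_norm] using hwr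
  set u : ℕ → ℝ := fun n => (n:ℝ) * (|c n| * r ^ n) / r with hudef
  have hus : Summable u := ((summable2 c hb r hr0.le hr1).div_const r)
  have hder : ∀ n : ℕ, ∀ x ∈ t, HasDerivAt (fun w : ℂ => (c n : ℂ) * w ^ n)
      ((c n : ℂ) * ((n:ℂ) * x ^ (n-1))) x := by
    intro n x _
    exact (hasDerivAt_pow n x).const_mul ((c n : ℂ))
  have hbound : ∀ n : ℕ, ∀ x ∈ t, ‖(c n : ℂ) * ((n:ℂ) * x ^ (n-1))‖ ≤ u n := by
    intro n x hx
    have hxn : ‖x‖ < r := by simpa [htdef, dist_eq_norm] using hx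
    rcases Nat.eq_zero_or_pos n with h | h
    · simp [h, hudef]
    · rw [norm_mul, norm_mul, norm_pow, Complex.norm_real, Complex.norm_natCast]
      have h1 : ‖x‖ ^ (n-1) ≤ r ^ (n-1) := pow_le_pow_left₀ (norm_nonneg x) hxn.le _
      have h2 : r ^ (n-1) = r ^ n / r := by
        rw [eq_div_iff hr0.ne', ← pow_succ]
        congr 1
        omega
      calc |c n| * ((n:ℝ) * ‖x‖ ^ (n-1)) ≤ |c n| * ((n:ℝ) * (r ^ n / r)) := by
            apply mul_le_mul_of_nonneg_left _ (abs_nonneg _)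
            apply mul_le_mul_of_nonneg_left _ (Nat.cast_nonneg n)
            rw [← h2]; exact h1
        _ = u n := by rw [hudef]; ring
  have hsum0 : Summable fun n : ℕ => (c n : ℂ) * (0:ℂ) ^ n :=
    (Fser_hasSum c hb 0 (by simp)).summable
  have h0t : (0:ℂ) ∈ t := by simp [htdef, hr0]
  have hds := hasDerivAt_tsum_of_isPreconnected hus hto htc.isPreconnected
    hder hbound h0t hsum0 hw₀t
  exact (hds.differentiableAt).differentiableWithinAt

theorem f_eq_Fser (c : ℕ → ℝ) (f : ℂ → ℂ) (hQ : HasQExp f fun n => (c n : ℂ))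
    (z : ℂ) (hz : z ∈ UHP) : f z = Fser c (Complex.exp (twoPiI * z)) := by
  have h1 := hQ z hz
  simp_rw [exp_pow] at h1
  exact h1.tsum_eq.symm

theorem log_div_twoPiI_mem {w : ℂ} (hw0 : w ≠ 0) (hw1 : ‖w‖ < 1) :
    Complex.log w / twoPiI ∈ UHP := by
  have hinv : (twoPiI)⁻¹ = ((-(2*Real.pi)⁻¹ : ℝ) : ℂ) * Complex.I := by
    apply inv_eq_of_mul_eq_one_right
    push_cast [twoPiI]
    have hpi : (Real.pi : ℂ) ≠ 0 := Complex.ofReal_ne_zero.2 Real.pi_ne_zero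
    field_simp
    try ring_nf
    try rw [Complex.I_sq]
    try ring
  show 0 < (Complex.log w / twoPiI).im
  rw [div_eq_mul_inv, hinv]
  have him : (Complex.log w * (((-(2*Real.pi)⁻¹ : ℝ) : ℂ) * Complex.I)).im
      = -(Complex.log w).re * (2*Real.pi)⁻¹ := by
    simp [Complex.mul_im, Complex.mul_re]
    try ring
  rw [him, Complex.log_re]
  have h1 : ‖w‖ < 1 := hw1
  have h2 : 0 < ‖w‖ := norm_pos_iff.2 hw0
  have h3 : Real.log ‖w‖ < 0 := Real.log_neg h2 h1
  have := Real.pi_pos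
  have h4 : 0 < (2*Real.pi)⁻¹ := by positivity
  nlinarith

-- weight 0 reduction: any value of f equals a value at a point with im ≥ 1/2
theorem weight0_reduction (f : ℂ → ℂ) (hw : IsWeaklyModular ((0:ℕ):ℤ) f)
    (z : ℂ) (hz : z ∈ UHP) :
    ∃ z' : ℂ, z' ∈ UHP ∧ (1/2 : ℝ) ≤ z'.im ∧ f z = f z' := by
  have hzim : 0 < z.im := hz
  set zh : UpperHalfPlane := ⟨z, hzim⟩ with hzh
  obtain ⟨g, hg⟩ := ModularGroup.exists_smul_mem_fd zh
  set zh' := g • zh with hzh'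
  refine ⟨(zh' : ℂ), zh'.2, ?_, ?_⟩
  · -- im ≥ 1/2
    obtain ⟨h1, h2⟩ := hg
    have him : 0 < (zh' : ℂ).im := zh'.2
    have hns : Complex.normSq (zh' : ℂ) = (zh' : ℂ).re ^ 2 + (zh' : ℂ).im ^ 2 := by
      rw [Complex.normSq_apply]; ring
    have hre : |(zh' : ℂ).re| ≤ 1/2 := h2
    have hre2 : (zh' : ℂ).re ^ 2 ≤ 1/4 := by
      have := abs_nonneg ((zh' : ℂ).re)
      have h3 : (zh' : ℂ).re ^ 2 = |(zh' : ℂ).re| ^ 2 := (sq_abs _).symm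
      rw [h3]
      nlinarith
    have h4 : 1 ≤ Complex.normSq (zh' : ℂ) := h1
    nlinarith
  · -- f z = f z'
    set a := g.1 0 0 with ha
    set b := g.1 0 1 with hb
    set cc := g.1 1 0 with hcc
    set d := g.1 1 1 with hd
    have hdet : a * d - b * cc = 1 := by
      have h9 := g.2
      rw [Matrix.det_fin_two] at h9
      simp only [ha, hb, hcc, hd]
      exact h9
    have hcoe : (zh' : ℂ) = ((a:ℂ) * z + (b:ℂ)) / ((cc:ℂ) * z + (d:ℂ)) := by
      rw [hzh', UpperHalfPlane.specialLinearGroup_apply]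
      push_cast
      norm_num
      simp only [ha, hb, hcc, hd, hzh, UpperHalfPlane.coe_mk]
    have := hw a b cc d hdet z hz
    rw [hcoe, this]
    simp

end Stmt15
end StatementFifteenAux8
noncomputable section StatementFifteenAux9
open Filter Topology Metric
namespace Stmt15

theorem k0_elim (c : ℕ → ℝ) (f : ℂ → ℂ) (hQ : HasQExp f fun n => (c n : ℂ))
    (hw : IsWeaklyModular ((0:ℕ):ℤ) f)
    (hb : ∀ s : ℝ, 0 < s → s < 1 → ∃ C : ℝ, ∀ n, |c n| * s ^ n ≤ C)
    (n₀ : ℕ) (hn₀ : 1 ≤ n₀) (hcn₀ : c n₀ ≠ 0)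
    (hmin : ∀ i, 1 ≤ i → i < n₀ → c i = 0) : False := by
  have hs1 := summable1 c hb
  set R : ℝ := Real.exp (-Real.pi) with hRdef
  have hR0 : 0 < R := Real.exp_pos _
  have hR1 : R < 1 := by
    rw [hRdef, Real.exp_lt_one_iff]
    linarith [Real.pi_pos]
  have hFd := Fser_diff c hb
  have hcont : ContinuousOn (Fser c) (closedBall (0:ℂ) R) :=
    hFd.continuousOn.mono (closedBall_subset_ball hR1)
  obtain ⟨wstar, hwsmem, hmax⟩ := (isCompact_closedBall (0:ℂ) R).exists_isMaxOn
    ⟨0, by simp [hR0.le]⟩ hcont.norm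
  have hmax' : IsMaxOn (norm ∘ Fser c) (ball (0:ℂ) 1) wstar := by
    intro w hwb
    have hw1 : ‖w‖ < 1 := by simpa [dist_eq_norm] using hwb
    by_cases hw0 : w = 0
    · subst hw0
      exact hmax (by simp [hR0.le])
    · set z := Complex.log w / twoPiI with hzdef
      have hzU := log_div_twoPiI_mem hw0 hw1
      have hexp : Complex.exp (twoPiI * z) = w := by
        rw [hzdef, mul_comm, div_mul_cancel₀ _ twoPiI_ne]
        exact Complex.exp_log hw0
      obtain ⟨z', hz'U, hz'im, hfz⟩ := weight0_reduction f hw z hzU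
      have h1 : Fser c w = f z := by rw [f_eq_Fser c f hQ z hzU, hexp]
      have h2 : f z' = Fser c (Complex.exp (twoPiI * z')) := f_eq_Fser c f hQ z' hz'U
      have h3 : ‖Complex.exp (twoPiI * z')‖ ≤ R := by
        rw [norm_q, hRdef]
        apply Real.exp_le_exp.2
        nlinarith [Real.pi_pos, hz'im]
      have h4 : Complex.exp (twoPiI * z') ∈ closedBall (0:ℂ) R := by
        simpa [dist_eq_norm] using h3
      have h5 : (norm ∘ Fser c) w = ‖Fser c (Complex.exp (twoPiI * z'))‖ := by
        simp only [Function.comp]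
        rw [h1, hfz, h2]
      rw [Set.mem_setOf_eq, h5]
      exact hmax h4
  have hwsball : wstar ∈ ball (0:ℂ) 1 := by
    rw [mem_ball]
    calc dist wstar 0 ≤ R := mem_closedBall.1 hwsmem
      _ < 1 := hR1
  have hconst := Complex.eqOn_of_isPreconnected_of_isMaxOn_norm
    (convex_ball (0:ℂ) 1).isPreconnected isOpen_ball hFd hwsball hmax'
  obtain ⟨K, hK0, hK⟩ := tailP2 c n₀ hn₀ hmin hb
  have hcnpos : 0 < |c n₀| := abs_pos.2 hcn₀
  set t : ℝ := min (1/2) (|c n₀| / (2 * (K + 1))) with htdef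
  have ht0 : 0 < t := lt_min (by norm_num) (by positivity)
  have ht12 : t ≤ 1/2 := min_le_left _ _
  have htK : t ≤ |c n₀| / (2 * (K + 1)) := min_le_right _ _
  have ht1 : t < 1 := lt_of_le_of_lt ht12 (by norm_num)
  have htball : ((t:ℝ):ℂ) ∈ ball (0:ℂ) 1 := by
    rw [mem_ball, dist_eq_norm, sub_zero, Complex.norm_real, Real.norm_eq_abs,
      abs_of_pos ht0]
    exact ht1
  have h0ball : (0:ℂ) ∈ ball (0:ℂ) 1 := by simp
  -- Fser c 0 = c 0
  have hF0 : Fser c 0 = ((c 0 : ℝ) : ℂ) := by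
    rw [Fser]
    rw [tsum_eq_single 0 (fun b hb0 => by rw [zero_pow hb0, mul_zero])]
    simp
  -- Fser c t = Pser c t
  have hFt : Fser c ((t:ℝ):ℂ) = ((Pser c t : ℝ) : ℂ) := by
    have hsum : Summable (fun n : ℕ => c n * t ^ n) := by
      apply Summable.of_abs
      refine (hs1 t ht0.le ht1).of_nonneg_of_le (fun n => abs_nonneg _) (fun n => ?_)
      rw [abs_mul, abs_pow, abs_of_pos ht0]
    have h1 : HasSum (fun n : ℕ => ((c n * t ^ n : ℝ) : ℂ)) ((Pser c t : ℝ) : ℂ) := by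
      rw [Complex.hasSum_ofReal]
      exact hsum.hasSum
    have h2 := Fser_hasSum c hb ((t:ℝ):ℂ)
      (by rw [Complex.norm_real, Real.norm_eq_abs, abs_of_pos ht0]; exact ht1)
    refine h2.unique ?_
    convert h1 using 2 with n
    push_cast
    ring
  have hPt : Pser c t = c 0 := by
    have h1 := hconst htball
    have h2 := hconst h0ball
    rw [Function.const] at h1 h2
    have h3 : Fser c ((t:ℝ):ℂ) = Fser c 0 := by rw [h1, h2]
    rw [hFt, hF0] at h3
    exact_mod_cast h3
  have hcontr := hK t ht0.le ht12
  rw [hPt] at hcontr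
  have h4 : |c 0 - c 0 - c n₀ * t ^ n₀| = |c n₀| * t ^ n₀ := by
    rw [show c 0 - c 0 - c n₀ * t ^ n₀ = -(c n₀ * t ^ n₀) by ring, abs_neg, abs_mul,
      abs_pow, abs_of_pos ht0]
  rw [h4, pow_succ] at hcontr
  have h5 : |c n₀| * t ^ n₀ ≤ (K * t) * t ^ n₀ := by
    calc |c n₀| * t ^ n₀ ≤ K * (t ^ n₀ * t) := hcontr
      _ = (K * t) * t ^ n₀ := by ring
  have h6 : |c n₀| ≤ K * t := le_of_mul_le_mul_right h5 (by positivity)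
  have h7 : K * t ≤ K * (|c n₀| / (2 * (K + 1))) := mul_le_mul_of_nonneg_left htK hK0
  have h8 : K * (|c n₀| / (2 * (K + 1))) ≤ |c n₀| / 2 := by
    rw [show K * (|c n₀| / (2 * (K + 1))) = K * |c n₀| / (2 * (K + 1)) by ring,
      div_le_div_iff₀ (by positivity) (by norm_num : (0:ℝ) < 2)]
    nlinarith
  linarith

end Stmt15
end StatementFifteenAux9
noncomputable section StatementFifteenAux10
open Filter Topology
namespace Stmt15

theorem twist_P (c : ℕ → ℝ) (v : ℝ) :
    Pser (fun n => (-1:ℝ)^n * c n) v = Pser c (-v) := by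
  rw [Pser, Pser]
  congr 1
  funext n
  rw [neg_pow]
  ring

theorem twist_Q (c : ℕ → ℝ) (v : ℝ) :
    Qser (fun n => (-1:ℝ)^n * c n) v = Qser c (-v) := by
  rw [Qser, Qser]
  congr 1
  funext n
  rw [neg_pow]
  ring

theorem twist_sign (c : ℕ → ℝ) (n₀ : ℕ) :
    Real.sign (((-1:ℝ)^(0:ℕ) * c 0) * ((-1:ℝ)^n₀ * c n₀))
      = (-1:ℝ)^n₀ * Real.sign (c 0 * c n₀) := by
  rw [pow_zero, one_mul]
  rcases Nat.even_or_odd n₀ with he | ho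
  · rw [he.neg_one_pow, one_mul, one_mul]
  · rw [ho.neg_one_pow, show c 0 * (-1 * c n₀) = -(c 0 * c n₀) by ring, sign_neg']
    ring

end Stmt15
end StatementFifteenAux10


open Filter Topology Stmt15 in
/-- For a non-cuspidal nonconstant modular form `f` of weight `k` with
real Fourier coefficients (first two nonzero coefficients `c 0` and `c n₀`,
`ε'_f = sign(c 0 · c n₀)`, `ε_f = (-1)^{n₀} ε'_f`), the quotients
`r₀(y) = Df(iy)/((i/y)^{k+2} Df(i/y))` and
`r₁(y) = Df(1/2+iy)/((i/(2y))^{k+2} Df(1/2+i/(4y)))` are real for small `y > 0` and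
satisfy `ε'_f (1 - r₀(y)) → +∞` and `ε_f (1 - r₁(y)) → +∞` as `y → 0⁺`. -/
theorem stmt15 (k : ℕ) (hke : Even k) (f : ℂ → ℂ) (c : ℕ → ℝ)
    (hf : IsModularForm k f (fun n => ((c n : ℝ) : ℂ)))
    (h0 : c 0 ≠ 0) (n₀ : ℕ) (hn₀ : 1 ≤ n₀) (hcn₀ : c n₀ ≠ 0)
    (hmin : ∀ i, 1 ≤ i → i < n₀ → c i = 0)
    (r₀ r₁ : ℝ → ℂ)
    (hr₀ : ∀ y : ℝ, r₀ y =
      Dop f (Complex.I * y) /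
        ((Complex.I / (y : ℂ)) ^ (k + 2) * Dop f (Complex.I / (y : ℂ))))
    (hr₁ : ∀ y : ℝ, r₁ y =
      Dop f ((1/2 : ℂ) + Complex.I * y) /
        ((Complex.I / (2 * (y : ℂ))) ^ (k + 2) *
          Dop f ((1/2 : ℂ) + Complex.I / (4 * (y : ℂ))))) :
    (∀ᶠ y in nhdsWithin (0 : ℝ) (Set.Ioi 0), (r₀ y).im = 0 ∧ (r₁ y).im = 0) ∧
    Tendsto (fun y => Real.sign (c 0 * c n₀) * (1 - r₀ y).re)
      (nhdsWithin (0 : ℝ) (Set.Ioi 0)) atTop ∧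
    Tendsto (fun y => (-1 : ℝ) ^ n₀ * Real.sign (c 0 * c n₀) * (1 - r₁ y).re)
      (nhdsWithin (0 : ℝ) (Set.Ioi 0)) atTop := by
  obtain ⟨hdiff, hwm, hQe⟩ := hf
  have hb : ∀ s : ℝ, 0 < s → s < 1 → ∃ C : ℝ, ∀ n, |c n| * s ^ n ≤ C :=
    coef_bdd c (fun z hz => (hQe z hz).summable)
  have hk0 : k ≠ 0 := by
    intro h
    subst h
    exact k0_elim c f hQe hwm hb n₀ hn₀ hcn₀ hmin
  have hkpos : (0:ℝ) < (k:ℝ) := by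
    have := Nat.pos_of_ne_zero hk0
    exact_mod_cast this
  have hpi := Real.pi_pos
  -- first application of core
  obtain ⟨hne0, htend0⟩ := core c hb h0 n₀ hn₀ hcn₀ hmin (2*Real.pi) (by positivity)
    ((k:ℝ)/(2*Real.pi)) (by positivity)
  -- twisted application
  set c' : ℕ → ℝ := fun n => (-1:ℝ)^n * c n with hc'def
  have hb' : ∀ s : ℝ, 0 < s → s < 1 → ∃ C : ℝ, ∀ n, |c' n| * s ^ n ≤ C := by
    intro s hs0 hs1
    obtain ⟨C, hC⟩ := hb s hs0 hs1
    exact ⟨C, fun n => by simpa [hc'def, abs_mul, abs_pow] using hC n⟩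
  have h0' : c' 0 ≠ 0 := by simpa [hc'def] using h0
  have hcn₀' : c' n₀ ≠ 0 := by
    simp only [hc'def]
    intro h
    rcases mul_eq_zero.1 h with h1 | h1
    · exact pow_ne_zero n₀ (by norm_num : (-1:ℝ) ≠ 0) h1
    · exact hcn₀ h1
  have hmin' : ∀ i, 1 ≤ i → i < n₀ → c' i = 0 := by
    intro i h1 h2
    simp [hc'def, hmin i h1 h2]
  obtain ⟨hne1, htend1⟩ := core c' hb' h0' n₀ hn₀ hcn₀' hmin' (Real.pi/2) (by positivity)
    (2*(k:ℝ)/Real.pi) (by positivity)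
  -- conversions for the twisted series
  have hargd : ∀ y : ℝ, Real.exp (-(Real.pi/2/y)) = Real.exp (-(Real.pi/(2*y))) := by
    intro y; rw [div_div]
  have hQ' : ∀ y : ℝ, Qser c' (Real.exp (-(Real.pi/2/y)))
      = Qser c (-Real.exp (-(Real.pi/(2*y)))) := by
    intro y; rw [hargd y, twist_Q]
  have hP' : ∀ y : ℝ, Pser c' (Real.exp (-(Real.pi/2/y)))
      = Pser c (-Real.exp (-(Real.pi/(2*y)))) := by
    intro y; rw [hargd y, twist_P]
  have hsgn' : Real.sign (c' 0 * c' n₀) = (-1:ℝ)^n₀ * Real.sign (c 0 * c n₀) := by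
    rw [hc'def]
    exact twist_sign c n₀
  refine ⟨?_, ?_, ?_⟩
  · -- both квotients are real
    filter_upwards [hne0, hne1, self_mem_nhdsWithin] with y hq0 hq1 hy
    have hy0 : (0:ℝ) < y := hy
    constructor
    · have hf0 := formula0 k hke c f hQe hwm hb y hy0 hq0
      rw [← hr₀ y] at hf0
      have : r₀ y = 1 - (((k / (2 * Real.pi) * y * (Pser c (Real.exp (-(2 * Real.pi / y))) /
          Qser c (Real.exp (-(2 * Real.pi / y)))) : ℝ)) : ℂ) := by
        rw [← hf0]; ring
      rw [this]
      simp only [Complex.sub_im, Complex.one_im, Complex.ofReal_im, sub_zero]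
    · rw [hQ' y] at hq1
      have hf1 := formula1 k hke c f hQe hwm hb y hy0 hq1
      rw [← hr₁ y] at hf1
      have : r₁ y = 1 - (((2 * k / Real.pi * y * (Pser c (-Real.exp (-(Real.pi / (2 * y)))) /
          Qser c (-Real.exp (-(Real.pi / (2 * y)))))) : ℝ) : ℂ) := by
        rw [← hf1]; ring
      rw [this]
      simp only [Complex.sub_im, Complex.one_im, Complex.ofReal_im, sub_zero]
  · refine htend0.congr' ?_
    filter_upwards [hne0, self_mem_nhdsWithin] with y hq0 hy
    have hy0 : (0:ℝ) < y := hy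
    have hf0 := formula0 k hke c f hQe hwm hb y hy0 hq0
    rw [← hr₀ y] at hf0
    have hre : (1 - r₀ y).re = k / (2 * Real.pi) * y * (Pser c (Real.exp (-(2 * Real.pi / y))) /
        Qser c (Real.exp (-(2 * Real.pi / y)))) := by
      rw [hf0, Complex.ofReal_re]
    rw [hre]
  · refine (htend1.congr' ?_)
    filter_upwards [hne1, self_mem_nhdsWithin] with y hq1 hy
    have hy0 : (0:ℝ) < y := hy
    rw [hQ' y] at hq1
    have hf1 := formula1 k hke c f hQe hwm hb y hy0 hq1
    rw [← hr₁ y] at hf1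
    have hre : (1 - r₁ y).re = 2 * k / Real.pi * y *
        (Pser c (-Real.exp (-(Real.pi / (2 * y)))) /
         Qser c (-Real.exp (-(Real.pi / (2 * y))))) := by
      rw [hf1, Complex.ofReal_re]
    rw [hre, hsgn', hP' y, hQ' y]
    try ring
end
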